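/- arXiv:2509.06648 — 4 statements merged into one kernel-verified Lean document; each statement's English description precedes it below -/
import Mathlib

section
/- As N → ∞, R_{N,s}/log N converges to 1/(γ(s)·s) uniformly in s ∈ 𝕊: for every ε > 0 there exists N₀ such that for all integers N ≥ N₀ and all s ∈ 𝕊, |R_{N,s}/log N − 1/(γ(s)·s)| ≤ ε. -/
open Filter Topology

/-- ℓ¹ dot product on `ℝ^d` (with the `ℓ¹` norm, modelled by `PiLp 1`). -/
noncomputable def dotp {d : ℕ} (x y : PiLp 1 (fun _ : Fin d => ℝ)) : ℝ :=
  ∑ j, x j * y j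

lemma dotp_smul {d : ℕ} (t : ℝ) (x y : PiLp 1 (fun _ : Fin d => ℝ)) :
    dotp (t • x) y = t * dotp x y := by
  unfold dotp
  rw [Finset.mul_sum]
  refine Finset.sum_congr rfl fun j _ => ?_
  have : (t • x) j = t * x j := rfl
  rw [this, mul_assoc]

lemma dotp_comm {d : ℕ} (x y : PiLp 1 (fun _ : Fin d => ℝ)) : dotp x y = dotp y x := by
  unfold dotp
  exact Finset.sum_congr rfl fun j _ => mul_comm _ _

lemma continuous_coord {d : ℕ} (j : Fin d) :
    Continuous (fun x : PiLp 1 (fun _ : Fin d => ℝ) => x j) :=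
  (continuous_apply j).comp (PiLp.continuous_ofLp 1 _)

set_option maxHeartbeats 1000000 in
/-- As `N → ∞`, `R_{N,s} / log N → 1/(γ(s)·s)` uniformly in `s` on the unit `ℓ¹` sphere. -/
theorem stmt1 {d : ℕ} (hd : 1 ≤ d)
    (c : PiLp 1 (fun _ : Fin d => ℝ) → ℝ)
    (γ : PiLp 1 (fun _ : Fin d => ℝ) → PiLp 1 (fun _ : Fin d => ℝ))
    (hc : ContinuousOn c {s : PiLp 1 (fun _ : Fin d => ℝ) | ‖s‖ = 1})
    (hγ : ContinuousOn γ {s : PiLp 1 (fun _ : Fin d => ℝ) | ‖s‖ = 1})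
    (hcpos : ∀ s : PiLp 1 (fun _ : Fin d => ℝ), ‖s‖ = 1 → 0 < c s)
    (hγpos : ∀ s : PiLp 1 (fun _ : Fin d => ℝ), ‖s‖ = 1 → 0 < dotp (γ s) s)
    (f : PiLp 1 (fun _ : Fin d => ℝ) → ℝ)
    (hf : ∀ ε > (0 : ℝ), ∃ R > (0 : ℝ), ∀ z : PiLp 1 (fun _ : Fin d => ℝ), ‖z‖ > R →
      |f z * (c (‖z‖⁻¹ • z))⁻¹ * Real.sqrt ‖z‖ *
        Real.exp (dotp z (γ (‖z‖⁻¹ • z))) - 1| ≤ ε)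
    (β : ℝ) (hβ : 0 < β)
    (r : ℕ → PiLp 1 (fun _ : Fin d => ℝ) → ℝ)
    (hr : ∀ N : ℕ, 2 ≤ N → ∀ s : PiLp 1 (fun _ : Fin d => ℝ), ‖s‖ = 1 →
      r N s = sSup {t : ℝ | 0 < t ∧ f (t • s) ≥ β / N}) :
    ∀ ε > (0 : ℝ), ∃ N₀ : ℕ, 2 ≤ N₀ ∧ ∀ N : ℕ, N₀ ≤ N →
      ∀ s : PiLp 1 (fun _ : Fin d => ℝ), ‖s‖ = 1 →
        |r N s / Real.log N - 1 / dotp (γ s) s| ≤ ε := by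
  classical
  intro ε hε
  -- compactness of the sphere
  have hScomp : IsCompact {s : PiLp 1 (fun _ : Fin d => ℝ) | ‖s‖ = 1} := by
    have h := isCompact_sphere (0 : PiLp 1 (fun _ : Fin d => ℝ)) 1
    convert h using 1
    ext s
    simp [Metric.sphere, dist_eq_norm]
    ext s
    simp [Metric.sphere, dist_eq_norm]
  have hSne : Set.Nonempty {s : PiLp 1 (fun _ : Fin d => ℝ) | ‖s‖ = 1} := by
    refine ⟨(WithLp.equiv 1 _).symm (Pi.single ⟨0, hd⟩ 1), ?_⟩
    rw [Set.mem_setOf_eq, PiLp.norm_eq_sum (by norm_num)]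
    simp [Pi.single_apply, apply_ite abs, Finset.sum_ite_eq']
  have hgcont : ContinuousOn (fun s : PiLp 1 (fun _ : Fin d => ℝ) => dotp (γ s) s)
      {s : PiLp 1 (fun _ : Fin d => ℝ) | ‖s‖ = 1} := by
    unfold dotp
    exact continuousOn_finset_sum _ fun j _ =>
      ((continuous_coord j).comp_continuousOn hγ).mul ((continuous_coord j).continuousOn)
  -- extrema of g and c on the sphere
  obtain ⟨gmin, hgmin0, hgmin⟩ : ∃ m : ℝ, 0 < m ∧
      ∀ y : PiLp 1 (fun _ : Fin d => ℝ), ‖y‖ = 1 → m ≤ dotp (γ y) y := by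
    obtain ⟨s₁, hs₁, h⟩ := hScomp.exists_isMinOn hSne hgcont
    exact ⟨_, hγpos s₁ hs₁, fun y hy => h hy⟩
  obtain ⟨gmax, hgmax0, hgmax⟩ : ∃ M : ℝ, 0 < M ∧
      ∀ y : PiLp 1 (fun _ : Fin d => ℝ), ‖y‖ = 1 → dotp (γ y) y ≤ M := by
    obtain ⟨s₂, hs₂, h⟩ := hScomp.exists_isMaxOn hSne hgcont
    exact ⟨_, hγpos s₂ hs₂, fun y hy => h hy⟩
  obtain ⟨cmin, hcmin0, hcmin⟩ : ∃ m : ℝ, 0 < m ∧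
      ∀ y : PiLp 1 (fun _ : Fin d => ℝ), ‖y‖ = 1 → m ≤ c y := by
    obtain ⟨s₃, hs₃, h⟩ := hScomp.exists_isMinOn hSne hc
    exact ⟨_, hcpos s₃ hs₃, fun y hy => h hy⟩
  obtain ⟨cmax, hcmax0, hcmax⟩ : ∃ M : ℝ, 0 < M ∧
      ∀ y : PiLp 1 (fun _ : Fin d => ℝ), ‖y‖ = 1 → c y ≤ M := by
    obtain ⟨s₄, hs₄, h⟩ := hScomp.exists_isMaxOn hSne hc
    exact ⟨_, hcpos s₄ hs₄, fun y hy => h hy⟩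
  -- asymptotic sandwich
  obtain ⟨R, hR0, hR⟩ := hf (1/2) (by norm_num)
  set B := max R 1 with hBdef
  have hB1 : (1:ℝ) ≤ B := le_max_right _ _
  have hB0 : (0:ℝ) < B := lt_of_lt_of_le one_pos hB1
  have key : ∀ s : PiLp 1 (fun _ : Fin d => ℝ), ‖s‖ = 1 → ∀ t : ℝ, B < t →
      1/2 * (c s / (Real.sqrt t * Real.exp (t * dotp (γ s) s))) ≤ f (t • s) ∧
      f (t • s) ≤ 3/2 * (c s / (Real.sqrt t * Real.exp (t * dotp (γ s) s))) := by
    intro s hs t ht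
    have ht1 : (1:ℝ) ≤ t := le_of_lt (lt_of_le_of_lt hB1 ht)
    have ht0 : (0:ℝ) < t := lt_of_lt_of_le one_pos ht1
    have hnorm : ‖t • s‖ = t := by
      rw [norm_smul, hs, Real.norm_eq_abs, abs_of_pos ht0, mul_one]
    have hself : ‖t • s‖⁻¹ • t • s = s := by
      rw [hnorm, smul_smul, inv_mul_cancel₀ (ne_of_gt ht0), one_smul]
    have hRt := hR (t • s) (by rw [hnorm]; exact lt_of_le_of_lt (le_max_left R 1) ht)
    rw [hself, hnorm] at hRt
    have hdot : dotp (t • s) (γ s) = t * dotp (γ s) s := by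
      rw [dotp_smul, dotp_comm]
    rw [hdot, abs_le] at hRt
    have hA1 : 1/2 ≤ f (t • s) * (c s)⁻¹ * Real.sqrt t * Real.exp (t * dotp (γ s) s) := by
      linarith [hRt.1]
    have hA2 : f (t • s) * (c s)⁻¹ * Real.sqrt t * Real.exp (t * dotp (γ s) s) ≤ 3/2 := by
      linarith [hRt.2]
    have hcs : 0 < c s := hcpos s hs
    have hsq : 0 < Real.sqrt t := Real.sqrt_pos.mpr ht0
    have hexp : 0 < Real.exp (t * dotp (γ s) s) := Real.exp_pos _
    have hQ : 0 < c s / (Real.sqrt t * Real.exp (t * dotp (γ s) s)) := by positivity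
    have hprod : (f (t • s) * (c s)⁻¹ * Real.sqrt t * Real.exp (t * dotp (γ s) s)) *
        (c s / (Real.sqrt t * Real.exp (t * dotp (γ s) s))) = f (t • s) := by
      field_simp
    constructor
    · calc 1/2 * (c s / (Real.sqrt t * Real.exp (t * dotp (γ s) s)))
          ≤ (f (t • s) * (c s)⁻¹ * Real.sqrt t * Real.exp (t * dotp (γ s) s)) *
            (c s / (Real.sqrt t * Real.exp (t * dotp (γ s) s))) :=
            mul_le_mul_of_nonneg_right hA1 hQ.le
        _ = f (t • s) := hprod
    · calc f (t • s)
          = (f (t • s) * (c s)⁻¹ * Real.sqrt t * Real.exp (t * dotp (γ s) s)) *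
            (c s / (Real.sqrt t * Real.exp (t * dotp (γ s) s))) := hprod.symm
        _ ≤ 3/2 * (c s / (Real.sqrt t * Real.exp (t * dotp (γ s) s))) :=
            mul_le_mul_of_nonneg_right hA2 hQ.le
  -- small parameters
  set ε' := min ε (1/(2*gmax)) with hε'def
  have hε'pos : 0 < ε' := lt_min hε (by positivity)
  have hε'le : ε' ≤ ε := min_le_left _ _
  have hε'le2 : ε' ≤ 1/(2*gmax) := min_le_right _ _
  set δ := ε * gmin with hδdef
  set δ' := ε' * gmin with hδ'def
  have hδ0 : 0 < δ := mul_pos hε hgmin0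
  have hδ'0 : 0 < δ' := mul_pos hε'pos hgmin0
  -- eventual conditions on N
  have hevN : ∀ᶠ N : ℕ in atTop,
      2 ≤ N ∧
      2 * gmax * (B + 1) ≤ Real.log N ∧
      3/2 * cmax < β * (N:ℝ) ^ δ ∧
      β * Real.sqrt (Real.log N / gmin) * (N:ℝ) ^ (1 - δ') ≤ 1/2 * cmin * (N:ℝ) := by
    refine (eventually_ge_atTop 2).and (Filter.Eventually.and ?_ (Filter.Eventually.and ?_ ?_))
    · exact (Real.tendsto_log_atTop.comp tendsto_natCast_atTop_atTop).eventually_ge_atTop _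
    · have h : Tendsto (fun N : ℕ => β * (N:ℝ) ^ δ) atTop atTop :=
        ((tendsto_rpow_atTop hδ0).comp tendsto_natCast_atTop_atTop).const_mul_atTop hβ
      exact h.eventually_gt_atTop _
    · have h4' : ∀ᶠ x : ℝ in atTop,
          β * Real.sqrt (Real.log x / gmin) * x ^ (1 - δ') ≤ 1/2 * cmin * x := by
        have hlog : ∀ᶠ x : ℝ in atTop, Real.log x ≤ x ^ δ' := by
          have h := (isLittleO_log_rpow_atTop hδ'0).def one_pos
          filter_upwards [h, eventually_ge_atTop (1:ℝ)] with x hx hx1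
          have h0 : (0:ℝ) < x := lt_of_lt_of_le one_pos hx1
          rw [Real.norm_eq_abs, Real.norm_eq_abs, one_mul] at hx
          calc Real.log x ≤ |Real.log x| := le_abs_self _
            _ ≤ |x ^ δ'| := hx
            _ = x ^ δ' := abs_of_nonneg (Real.rpow_nonneg h0.le _)
        have hmono : ∀ᶠ x : ℝ in atTop, β / Real.sqrt gmin ≤ 1/2 * cmin * x ^ (δ'/2) := by
          have h : Tendsto (fun x : ℝ => 1/2 * cmin * x ^ (δ'/2)) atTop atTop :=
            (tendsto_rpow_atTop (by positivity)).const_mul_atTop (by positivity)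
          exact h.eventually_ge_atTop _
        filter_upwards [hlog, hmono, eventually_ge_atTop (1:ℝ)] with x hx hx2 hx1
        have hx0 : (0:ℝ) < x := lt_of_lt_of_le one_pos hx1
        have hy0 : 0 ≤ x ^ (δ'/2) := Real.rpow_nonneg hx0.le _
        have hxx : x ^ δ' = (x ^ (δ'/2)) ^ 2 := by
          rw [← Real.rpow_natCast (x ^ (δ'/2)) 2, ← Real.rpow_mul hx0.le]
          norm_num
        have heq : Real.sqrt (x ^ δ' / gmin) = x ^ (δ'/2) / Real.sqrt gmin := by
          rw [hxx, Real.sqrt_div (by positivity), Real.sqrt_sq hy0]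
        have hsq : Real.sqrt (Real.log x / gmin) ≤ x ^ (δ'/2) / Real.sqrt gmin :=
          le_trans (Real.sqrt_le_sqrt ((div_le_div_iff_of_pos_right hgmin0).mpr hx)) (le_of_eq heq)
        have he1 : δ'/2 + (1 - δ') = 1 - δ'/2 := by ring
        have he2 : δ'/2 + (1 - δ'/2) = 1 := by ring
        calc β * Real.sqrt (Real.log x / gmin) * x ^ (1 - δ')
            ≤ β * (x ^ (δ'/2) / Real.sqrt gmin) * x ^ (1 - δ') :=
              mul_le_mul_of_nonneg_right (mul_le_mul_of_nonneg_left hsq hβ.le)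
                (Real.rpow_nonneg hx0.le _)
          _ = (β / Real.sqrt gmin) * (x ^ (δ'/2) * x ^ (1 - δ')) := by ring
          _ = (β / Real.sqrt gmin) * x ^ (1 - δ'/2) := by
              rw [← Real.rpow_add hx0, he1]
          _ ≤ (1/2 * cmin * x ^ (δ'/2)) * x ^ (1 - δ'/2) :=
              mul_le_mul_of_nonneg_right hx2 (Real.rpow_nonneg hx0.le _)
          _ = 1/2 * cmin * (x ^ (δ'/2) * x ^ (1 - δ'/2)) := by ring
          _ = 1/2 * cmin * x := by rw [← Real.rpow_add hx0, he2, Real.rpow_one]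
      exact tendsto_natCast_atTop_atTop.eventually h4'
  obtain ⟨N₁, hN₁⟩ := eventually_atTop.mp hevN
  refine ⟨max N₁ 2, le_max_right _ _, ?_⟩
  intro N hN s hs
  obtain ⟨hN2, hlogN, hE2, hE4⟩ := hN₁ N (le_trans (le_max_left _ _) hN)
  set gs := dotp (γ s) s with hgsdef
  set L := Real.log (N:ℝ) with hLdef
  have hL0 : 0 < L := lt_of_lt_of_le (by positivity) hlogN
  have hN2R : (2:ℝ) ≤ (N:ℝ) := by exact_mod_cast hN2
  have hNR : (0:ℝ) < (N:ℝ) := by linarith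
  have hgs0 : 0 < gs := hγpos s hs
  have hgsl : gmin ≤ gs := hgmin s hs
  have hgsu : gs ≤ gmax := hgmax s hs
  have hBL : B + 1 ≤ L / (2*gmax) := by
    rw [le_div_iff₀ (by positivity)]
    nlinarith [hlogN]
  have hTu_ge : B + 1 ≤ (1/gs + ε) * L := by
    have h1 : 1/gmax ≤ 1/gs := one_div_le_one_div_of_le hgs0 hgsu
    have h2 : 1/(2*gmax) ≤ 1/gmax := one_div_le_one_div_of_le hgmax0 (by linarith)
    calc B + 1 ≤ L / (2*gmax) := hBL
      _ = 1/(2*gmax) * L := by ring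
      _ ≤ (1/gs + ε) * L := mul_le_mul_of_nonneg_right (by linarith) hL0.le
  -- upper bound for the set
  have hub : ∀ t ∈ {t : ℝ | 0 < t ∧ f (t • s) ≥ β / N}, t ≤ (1/gs + ε) * L := by
    rintro t ⟨ht0, htf⟩
    by_contra hcon
    push_neg at hcon
    have htB : B < t := by linarith
    have hk := (key s hs t htB).2
    have ht1 : (1:ℝ) ≤ t := le_trans hB1 htB.le
    have hsq1 : 1 ≤ Real.sqrt t := by
      rw [show (1:ℝ) = Real.sqrt 1 from Real.sqrt_one.symm]
      exact Real.sqrt_le_sqrt ht1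
    have hexp_ge : Real.exp ((1 + δ) * L) ≤ Real.exp (t * gs) := by
      apply Real.exp_le_exp.mpr
      have hδgs : δ ≤ ε * gs := mul_le_mul_of_nonneg_left hgsl hε.le
      have h1 : (1 + δ) * L ≤ ((1/gs + ε) * L) * gs := by
        have hid : (1/gs + ε) * L * gs = (1 + ε * gs) * L := by
          field_simp
        rw [hid]
        exact mul_le_mul_of_nonneg_right (by linarith) hL0.le
      have h2 : ((1/gs + ε) * L) * gs ≤ t * gs := mul_le_mul_of_nonneg_right hcon.le hgs0.le
      linarith
    have hQle : c s / (Real.sqrt t * Real.exp (t * gs)) ≤ cmax / Real.exp ((1+δ)*L) := by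
      apply div_le_div₀ hcmax0.le (hcmax s hs) (Real.exp_pos _)
      calc Real.exp ((1+δ)*L) ≤ Real.exp (t * gs) := hexp_ge
        _ ≤ Real.sqrt t * Real.exp (t * gs) := le_mul_of_one_le_left (Real.exp_pos _).le hsq1
    have hNδ : Real.exp ((1+δ)*L) = (N:ℝ) * (N:ℝ) ^ δ := by
      rw [add_mul, one_mul, Real.exp_add, Real.exp_log hNR]
      congr 1
      rw [Real.rpow_def_of_pos hNR, hLdef, mul_comm]
    have hflt : f (t • s) < β / N := by
      have hp : (0:ℝ) < (N:ℝ) ^ δ := Real.rpow_pos_of_pos hNR δ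
      calc f (t • s) ≤ 3/2 * (c s / (Real.sqrt t * Real.exp (t * gs))) := hk
        _ ≤ 3/2 * (cmax / ((N:ℝ) * (N:ℝ) ^ δ)) := by
            rw [← hNδ]
            exact mul_le_mul_of_nonneg_left hQle (by norm_num)
        _ = (3/2 * cmax) / ((N:ℝ) * (N:ℝ) ^ δ) := by ring
        _ < β / N := by
            rw [div_lt_div_iff₀ (by positivity) hNR]
            nlinarith [mul_lt_mul_of_pos_right hE2 hNR]
    exact absurd htf (not_le.mpr hflt)
  -- lower bound: an explicit member of the set
  set t₀ := (1/gs - ε') * L with ht₀def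
  have hcoef : 1/(2*gmax) ≤ 1/gs - ε' := by
    have h1 : 1/gmax ≤ 1/gs := one_div_le_one_div_of_le hgs0 hgsu
    have hid : 1/gmax - 1/(2*gmax) = 1/(2*gmax) := by
      field_simp
      ring
    linarith
  have ht₀B : B + 1 ≤ t₀ := by
    calc B + 1 ≤ L / (2*gmax) := hBL
      _ = 1/(2*gmax) * L := by ring
      _ ≤ (1/gs - ε') * L := mul_le_mul_of_nonneg_right hcoef hL0.le
  have ht₀pos : 0 < t₀ := lt_of_lt_of_le (by linarith) ht₀B
  have hkl := (key s hs t₀ (by linarith)).1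
  have ht₀le : t₀ ≤ L / gmin := by
    have h1 : 1/gs - ε' ≤ 1/gmin := by
      have := one_div_le_one_div_of_le hgmin0 hgsl
      linarith [hε'pos]
    calc t₀ ≤ 1/gmin * L := mul_le_mul_of_nonneg_right h1 hL0.le
      _ = L / gmin := by ring
  have hsqle : Real.sqrt t₀ ≤ Real.sqrt (L / gmin) := Real.sqrt_le_sqrt ht₀le
  have hexpN : Real.exp ((1 - δ') * L) = (N:ℝ) ^ (1 - δ') := by
    rw [Real.rpow_def_of_pos hNR, hLdef, mul_comm]
  have hexp_le : Real.exp (t₀ * gs) ≤ (N:ℝ) ^ (1 - δ') := by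
    rw [← hexpN]
    apply Real.exp_le_exp.mpr
    have hid : t₀ * gs = (1 - ε' * gs) * L := by
      rw [ht₀def]
      have h9 : (1/gs - ε') * L * gs = (1/gs * gs - ε' * gs) * L := by ring
      rw [h9, one_div, inv_mul_cancel₀ hgs0.ne']
    rw [hid]
    have h2 : δ' ≤ ε' * gs := mul_le_mul_of_nonneg_left hgsl hε'pos.le
    nlinarith [hL0.le]
  have hD0 : 0 < Real.sqrt (L/gmin) * (N:ℝ) ^ (1 - δ') :=
    mul_pos (Real.sqrt_pos.mpr (by positivity)) (Real.rpow_pos_of_pos hNR _)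
  have hQge : β / N ≤ 1/2 * (c s / (Real.sqrt t₀ * Real.exp (t₀ * gs))) := by
    have hstep : β / N ≤ (1/2 * cmin) / (Real.sqrt (L/gmin) * (N:ℝ) ^ (1 - δ')) := by
      rw [div_le_div_iff₀ hNR hD0]
      calc β * (Real.sqrt (L/gmin) * (N:ℝ) ^ (1 - δ'))
          = β * Real.sqrt (L/gmin) * (N:ℝ) ^ (1 - δ') := by ring
        _ ≤ 1/2 * cmin * (N:ℝ) := hE4
    have hden_pos : 0 < Real.sqrt t₀ * Real.exp (t₀ * gs) :=
      mul_pos (Real.sqrt_pos.mpr ht₀pos) (Real.exp_pos _)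
    have hmono2 : (1/2 * cmin) / (Real.sqrt (L/gmin) * (N:ℝ) ^ (1 - δ')) ≤
        1/2 * (c s / (Real.sqrt t₀ * Real.exp (t₀ * gs))) := by
      rw [show 1/2 * (c s / (Real.sqrt t₀ * Real.exp (t₀ * gs))) =
          (1/2 * c s) / (Real.sqrt t₀ * Real.exp (t₀ * gs)) by ring]
      apply div_le_div₀ (by nlinarith [hcpos s hs]) (by nlinarith [hcmin s hs]) hden_pos
      exact mul_le_mul hsqle hexp_le (Real.exp_pos _).le (Real.sqrt_nonneg _)
    exact hstep.trans hmono2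
  have ht₀mem : t₀ ∈ {t : ℝ | 0 < t ∧ f (t • s) ≥ β / N} :=
    ⟨ht₀pos, le_trans hQge hkl⟩
  -- conclude
  rw [hr N hN2 s hs]
  have hbdd : BddAbove {t : ℝ | 0 < t ∧ f (t • s) ≥ β / N} := ⟨_, hub⟩
  have hlow : t₀ ≤ sSup {t : ℝ | 0 < t ∧ f (t • s) ≥ β / N} := le_csSup hbdd ht₀mem
  have hup : sSup {t : ℝ | 0 < t ∧ f (t • s) ≥ β / N} ≤ (1/gs + ε) * L :=
    csSup_le ⟨t₀, ht₀mem⟩ hub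
  rw [abs_le]
  constructor
  · have h1 : 1/gs - ε' ≤ sSup {t : ℝ | 0 < t ∧ f (t • s) ≥ β / N} / L := by
      rw [le_div_iff₀ hL0]
      calc (1/gs - ε') * L = t₀ := ht₀def.symm
        _ ≤ _ := hlow
    have h2 : 1 / gs - sSup {t : ℝ | 0 < t ∧ f (t • s) ≥ β / N} / L ≤ ε' := by linarith
    linarith
  · have h2 : sSup {t : ℝ | 0 < t ∧ f (t • s) ≥ β / N} / L ≤ 1/gs + ε := by
      rw [div_le_iff₀ hL0]
      exact hup
    linarith
end

section
/- Let N > 0, x₀ ∈ V, let u : V → ℝ be finitely supported with u ≥ 0, and let f : V → ℝ satisfy 0 ≤ f(x) ≤ D(x) for all x. Suppose that for every x ∈ V, Σ_{y∈V} (ρ(x,y)/D(y))·u(y) − u(x) = f(x) − N·1_{x = x₀}. Then for every x ∈ V, 0 ≤ U(x₀,x) − u(x)/N ≤ c'²/(c δ N). -/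
open Filter Topology

private lemma summable_mul_of_le {ι : Type*} {g h : ι → ℝ} (hg : Summable g)
    (hg0 : ∀ z, 0 ≤ g z) (h0 : ∀ z, 0 ≤ h z) {B : ℝ} (hB : ∀ z, h z ≤ B) :
    Summable fun z => g z * h z :=
  Summable.of_nonneg_of_le (fun z => mul_nonneg (hg0 z) (h0 z))
    (fun z => mul_le_mul_of_nonneg_left (hB z) (hg0 z)) (hg.mul_right B)

private lemma tsum_mul_le_of_le {ι : Type*} {g h : ι → ℝ} (hg : Summable g)
    (hg0 : ∀ z, 0 ≤ g z) (h0 : ∀ z, 0 ≤ h z) {B : ℝ} (hB : ∀ z, h z ≤ B) :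
    (∑' z, g z * h z) ≤ (∑' z, g z) * B := by
  rw [← tsum_mul_right]
  exact Summable.tsum_le_tsum (fun z => mul_le_mul_of_nonneg_left (hB z) (hg0 z))
    (summable_mul_of_le hg hg0 h0 hB) (hg.mul_right B)

private lemma fubini_nonneg {V W : Type*} {F : V → W → ℝ} (h0 : ∀ v w, 0 ≤ F v w)
    (hrow : ∀ v, Summable (F v)) (hcol : Summable fun v => ∑' w, F v w) :
    (∀ w, Summable fun v => F v w) ∧ (Summable fun w => ∑' v, F v w) ∧
      (∑' w, ∑' v, F v w) = ∑' v, ∑' w, F v w := by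
  have hprod : Summable (Function.uncurry F) :=
    (summable_prod_of_nonneg (fun p => h0 p.1 p.2)).2 ⟨hrow, hcol⟩
  have hswap : Summable ((Function.uncurry F) ∘ (Equiv.prodComm W V)) :=
    ((Equiv.prodComm W V).summable_iff).2 hprod
  have h2 := (summable_prod_of_nonneg (f := fun p : W × V => F p.2 p.1)
    (fun p => h0 p.2 p.1)).1 hswap
  exact ⟨h2.1, h2.2, Summable.tsum_comm' hprod hrow h2.1⟩


/-- Matrix powers of a kernel `P` on a countable set. -/
noncomputable def Ppow {V : Type*} [DecidableEq V] (P : V → V → ℝ) : ℕ → V → V → ℝ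
  | 0 => fun x y => if x = y then 1 else 0
  | n + 1 => fun x y => ∑' z, P x z * Ppow P n z y

/-- The potential `U(x,y) = Σ_n Pⁿ(x,y)`. -/
noncomputable def pot {V : Type*} [DecidableEq V] (P : V → V → ℝ) (x y : V) : ℝ :=
  ∑' n, Ppow P n x y

/-- If the odometer `u` satisfies `Tu = f − N δ_{x₀}` with `0 ≤ f ≤ D`, then
`0 ≤ U(x₀,x) − u(x)/N ≤ c'²/(c δ N)` for every `x`. -/
theorem stmt9 {V : Type*} [Countable V] [DecidableEq V]
    (ρ : V → V → ℝ) (m2 : V → ℝ)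
    (hsymm : ∀ x y, ρ x y = ρ y x)
    (hρ : ∀ x y, 0 ≤ ρ x y) (hdiag : ∀ x, ρ x x = 0)
    (hm2 : ∀ x, 0 ≤ m2 x)
    (hρsum : ∀ x, Summable (fun z => ρ x z))
    (D : V → ℝ) (hD : ∀ x, D x = (∑' z, ρ x z) + m2 x)
    (c c' δ : ℝ) (hc : 0 < c) (hcc' : c ≤ c') (hδ : δ ∈ Set.Ioo (0 : ℝ) 1)
    (hDb : ∀ x, c ≤ D x ∧ D x ≤ c')
    (hm2δ : ∀ x, δ ≤ m2 x / D x)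
    (P : V → V → ℝ) (hPdef : ∀ x y, P x y = ρ x y / D x)
    (N : ℝ) (hN : 0 < N) (x₀ : V)
    (u f : V → ℝ)
    (hufin : (Function.support u).Finite) (hupos : ∀ x, 0 ≤ u x)
    (hfb : ∀ x, 0 ≤ f x ∧ f x ≤ D x)
    (heq : ∀ x, (∑' y, (ρ x y / D y) * u y) - u x = f x - N * (if x = x₀ then 1 else 0)) :
    ∀ x, 0 ≤ pot P x₀ x - u x / N ∧ pot P x₀ x - u x / N ≤ c' ^ 2 / (c * δ * N) := by
  obtain ⟨hδ0, hδ1⟩ := hδ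
  have hr0 : (0:ℝ) ≤ 1 - δ := by linarith
  have hr1 : 1 - δ < 1 := by linarith
  have hDpos : ∀ x, 0 < D x := fun x => lt_of_lt_of_le hc (hDb x).1
  have hP0 : ∀ x y, 0 ≤ P x y := fun x y => by
    rw [hPdef]; exact div_nonneg (hρ x y) (hDpos x).le
  have hPsum : ∀ x, Summable (P x) := fun x => by
    have : P x = fun y => ρ x y * (D x)⁻¹ := by
      funext y; rw [hPdef, div_eq_mul_inv]
    rw [this]; exact (hρsum x).mul_right _
  have hProw : ∀ x, ∑' y, P x y ≤ 1 - δ := by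
    intro x
    have h1 : ∑' y, P x y = (∑' y, ρ x y) / D x := by
      rw [tsum_congr (fun y => by rw [hPdef x y, div_eq_mul_inv]), tsum_mul_right,
        div_eq_mul_inv]
    have h2 : (∑' y, ρ x y) = D x - m2 x := by rw [hD x]; ring
    rw [h1, h2, sub_div, div_self (hDpos x).ne']
    have := hm2δ x; linarith
  have hP1 : ∀ x y, P x y ≤ 1 - δ := fun x y =>
    le_trans (Summable.le_tsum (hPsum x) y (fun z _ => hP0 x z)) (hProw x)
  -- bundled facts about Ppow
  have hPn : ∀ n : ℕ, ∀ x : V, (∀ y, 0 ≤ Ppow P n x y) ∧ Summable (Ppow P n x) ∧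
      ∑' y, Ppow P n x y ≤ (1-δ)^n := by
    intro n
    induction n with
    | zero =>
      intro x
      refine ⟨fun y => by simp [Ppow]; positivity, ?_, ?_⟩
      · exact summable_of_ne_finset_zero (s := {x}) (fun y hy => by
          simp [Ppow]; intro h; exact absurd (by simp [h]) hy)
      · have : ∑' y, Ppow P 0 x y = 1 := by
          simp only [Ppow]
          rw [show (fun y => if x = y then (1:ℝ) else 0) = fun y => if y = x then (1:ℝ) else 0 from
            funext fun y => by simp [eq_comm]]
          exact tsum_ite_eq x 1
        rw [this]; simp
    | succ n ih =>
      intro x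
      have hF0 : ∀ z y, 0 ≤ P x z * Ppow P n z y :=
        fun z y => mul_nonneg (hP0 x z) ((ih z).1 y)
      have hFrow : ∀ z, Summable fun y => P x z * Ppow P n z y :=
        fun z => ((ih z).2.1).mul_left _
      have hFcol : Summable fun z => ∑' y, P x z * Ppow P n z y := by
        have heqz : ∀ z, (∑' y, P x z * Ppow P n z y) = P x z * ∑' y, Ppow P n z y :=
          fun z => tsum_mul_left
        rw [show (fun z => ∑' y, P x z * Ppow P n z y)
            = fun z => P x z * ∑' y, Ppow P n z y from funext heqz]
        exact summable_mul_of_le (hPsum x) (hP0 x)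
          (fun z => tsum_nonneg ((ih z).1)) (fun z => (ih z).2.2)
      obtain ⟨hcolsum, hsum, hswap⟩ := fubini_nonneg hF0 hFrow hFcol
      have hdef : Ppow P (n+1) x = fun y => ∑' z, P x z * Ppow P n z y := rfl
      refine ⟨fun y => tsum_nonneg (fun z => hF0 z y), by rw [hdef]; exact hsum, ?_⟩
      rw [hdef, hswap]
      calc ∑' z, ∑' y, P x z * Ppow P n z y
          = ∑' z, P x z * ∑' y, Ppow P n z y := tsum_congr fun z => tsum_mul_left
        _ ≤ (∑' z, P x z) * (1-δ)^n := tsum_mul_le_of_le (hPsum x) (hP0 x)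
            (fun z => tsum_nonneg ((ih z).1)) (fun z => (ih z).2.2)
        _ ≤ (1-δ) * (1-δ)^n := by
            apply mul_le_mul_of_nonneg_right (hProw x) (by positivity)
        _ = (1-δ)^(n+1) := by ring

  have hPle : ∀ n x y, Ppow P n x y ≤ (1-δ)^n := fun n x y =>
    le_trans (Summable.le_tsum (hPn n x).2.1 y (fun z _ => (hPn n x).1 z)) (hPn n x).2.2
  -- right multiplication
  have hR : ∀ n x y, Ppow P (n+1) x y = ∑' z, Ppow P n x z * P z y := by
    intro n
    induction n with
    | zero =>
      intro x y
      have h1 : Ppow P 1 x y = ∑' z, P x z * Ppow P 0 z y := rfl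
      rw [h1]
      rw [tsum_eq_single y (fun z hz => by simp [Ppow, hz]),
        tsum_eq_single x (fun z hz => by simp [Ppow, Ne.symm hz])]
      simp [Ppow]
    | succ n ih =>
      intro x y
      have h1 : Ppow P (n+2) x y = ∑' z, P x z * Ppow P (n+1) z y := rfl
      have h2 : ∀ z, P x z * Ppow P (n+1) z y = ∑' w, (P x z * Ppow P n z w) * P w y := by
        intro z
        rw [ih z y, ← tsum_mul_left]
        exact tsum_congr fun w => by ring
      have hF0 : ∀ z w, 0 ≤ (P x z * Ppow P n z w) * P w y := fun z w =>
        mul_nonneg (mul_nonneg (hP0 x z) ((hPn n z).1 w)) (hP0 w y)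
      have hFrow : ∀ z, Summable fun w => (P x z * Ppow P n z w) * P w y := fun z =>
        summable_mul_of_le ((hPn n z).2.1.mul_left _)
          (fun w => mul_nonneg (hP0 x z) ((hPn n z).1 w)) (fun w => hP0 w y)
          (fun w => hP1 w y)
      have hFcol : Summable fun z => ∑' w, (P x z * Ppow P n z w) * P w y := by
        apply Summable.of_nonneg_of_le (fun z => tsum_nonneg (hF0 z))
          (fun z => ?_) ((hPsum x).mul_right ((1-δ)^n * (1-δ)))
        calc (∑' w, (P x z * Ppow P n z w) * P w y)
            ≤ (∑' w, P x z * Ppow P n z w) * (1-δ) :=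
              tsum_mul_le_of_le ((hPn n z).2.1.mul_left _)
                (fun w => mul_nonneg (hP0 x z) ((hPn n z).1 w))
                (fun w => hP0 w y) (fun w => hP1 w y)
          _ = (P x z * ∑' w, Ppow P n z w) * (1-δ) := by rw [tsum_mul_left]
          _ ≤ (P x z * (1-δ)^n) * (1-δ) := by
              apply mul_le_mul_of_nonneg_right _ hr0
              exact mul_le_mul_of_nonneg_left (hPn n z).2.2 (hP0 x z)
          _ = P x z * ((1-δ)^n * (1-δ)) := by ring
      obtain ⟨_, _, hswap⟩ := fubini_nonneg hF0 hFrow hFcol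
      rw [h1, tsum_congr h2, ← hswap]
      apply tsum_congr; intro w
      have : Ppow P (n+1) x w = ∑' z, P x z * Ppow P n z w := rfl
      rw [this, ← tsum_mul_right]
  -- reversibility
  have hrev : ∀ n x y, D x * Ppow P n x y = D y * Ppow P n y x := by
    intro n
    induction n with
    | zero =>
      intro x y
      by_cases h : x = y
      · subst h; rfl
      · simp [Ppow, h, Ne.symm h]
    | succ n ih =>
      intro x y
      have h1 : Ppow P (n+1) x y = ∑' z, P x z * Ppow P n z y := rfl
      rw [h1, ← tsum_mul_left]
      have h3 : ∀ z, D x * (P x z * Ppow P n z y) = D y * (Ppow P n y z * P z x) := by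
        intro z
        have hDP : D x * P x z = D z * P z x := by
          rw [hPdef, hPdef, mul_div_cancel₀ _ (hDpos x).ne', hsymm x z,
            mul_div_cancel₀ _ (hDpos z).ne']
        calc D x * (P x z * Ppow P n z y) = (D x * P x z) * Ppow P n z y := by ring
          _ = (D z * P z x) * Ppow P n z y := by rw [hDP]
          _ = P z x * (D z * Ppow P n z y) := by ring
          _ = P z x * (D y * Ppow P n y z) := by rw [ih z y]
          _ = D y * (Ppow P n y z * P z x) := by ring
      rw [tsum_congr h3, tsum_mul_left, ← hR n y x]
  have hc' : 0 < c' := lt_of_lt_of_le hc hcc'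
  set F : Finset V := hufin.toFinset with hFdef
  have huF : ∀ y, y ∉ F → u y = 0 := fun y hy => by
    by_contra h; exact hy (hufin.mem_toFinset.2 h)
  -- summability of the f-part, with bound
  have hfs : ∀ (k : ℕ) (x : V), Summable (fun z => f z * Ppow P k z x) ∧
      (∑' z, f z * Ppow P k z x) ≤ c' * (1-δ)^k ∧ 0 ≤ ∑' z, f z * Ppow P k z x := by
    intro k x
    have hle : ∀ z, f z * Ppow P k z x ≤ c' * Ppow P k x z := by
      intro z
      calc f z * Ppow P k z x ≤ D z * Ppow P k z x :=
            mul_le_mul_of_nonneg_right (hfb z).2 ((hPn k z).1 x)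
        _ = D x * Ppow P k x z := hrev k z x
        _ ≤ c' * Ppow P k x z := mul_le_mul_of_nonneg_right (hDb x).2 ((hPn k x).1 z)
    have h0 : ∀ z, 0 ≤ f z * Ppow P k z x := fun z =>
      mul_nonneg (hfb z).1 ((hPn k z).1 x)
    have hs : Summable (fun z => f z * Ppow P k z x) :=
      Summable.of_nonneg_of_le h0 hle (((hPn k x).2.1).mul_left c')
    refine ⟨hs, ?_, tsum_nonneg h0⟩
    calc (∑' z, f z * Ppow P k z x) ≤ ∑' z, c' * Ppow P k x z :=
          Summable.tsum_le_tsum hle hs (((hPn k x).2.1).mul_left c')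
      _ = c' * ∑' z, Ppow P k x z := tsum_mul_left
      _ ≤ c' * (1-δ)^k := mul_le_mul_of_nonneg_left (hPn k x).2.2 hc'.le
  -- the key recursion from heq
  have hkey : ∀ z, (∑ y ∈ F, u y * P y z) = u z + f z - N * (if z = x₀ then 1 else 0) := by
    intro z
    have h1 : (∑' y, (ρ z y / D y) * u y) = ∑ y ∈ F, u y * P y z := by
      rw [tsum_eq_sum (s := F) (fun y hy => by rw [huF y hy, mul_zero])]
      exact Finset.sum_congr rfl fun y _ => by
        rw [hPdef, hsymm y z]; ring
    have := heq z
    rw [h1] at this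
    linarith
  have hrec : ∀ (k : ℕ) (x : V), (∑ y ∈ F, u y * Ppow P (k+1) y x)
      = (∑ y ∈ F, u y * Ppow P k y x) + (∑' z, f z * Ppow P k z x)
        - N * Ppow P k x₀ x := by
    intro k x
    have hterm : ∀ y, u y * Ppow P (k+1) y x = ∑' z, (u y * P y z) * Ppow P k z x := by
      intro y
      have : Ppow P (k+1) y x = ∑' z, P y z * Ppow P k z x := rfl
      rw [this, ← tsum_mul_left]
      exact tsum_congr fun z => by ring
    have hsumy : ∀ y ∈ F, Summable (fun z => (u y * P y z) * Ppow P k z x) := by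
      intro y _
      exact summable_mul_of_le ((hPsum y).mul_left (u y))
        (fun z => mul_nonneg (hupos y) (hP0 y z)) (fun z => (hPn k z).1 x)
        (fun z => hPle k z x)
    have hstep1 : (∑ y ∈ F, u y * Ppow P (k+1) y x)
        = ∑' z, ∑ y ∈ F, (u y * P y z) * Ppow P k z x := by
      rw [Finset.sum_congr rfl (fun y _ => hterm y), ← Summable.tsum_finsetSum hsumy]
    rw [hstep1]
    have hstep2 : ∀ z, (∑ y ∈ F, (u y * P y z) * Ppow P k z x)
        = (u z + f z - N * (if z = x₀ then 1 else 0)) * Ppow P k z x := by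
      intro z
      rw [← Finset.sum_mul, hkey z]
    rw [tsum_congr hstep2]
    have s1 : Summable (fun z => u z * Ppow P k z x) :=
      summable_of_ne_finset_zero (s := F) (fun z hz => by rw [huF z hz, zero_mul])
    have s2 : Summable (fun z => f z * Ppow P k z x) := (hfs k x).1
    have s3 : Summable (fun z => (N * (if z = x₀ then 1 else 0)) * Ppow P k z x) :=
      summable_of_ne_finset_zero (s := {x₀}) (fun z hz => by
        simp at hz; simp [hz])
    have hsplit : ∀ z, (u z + f z - N * (if z = x₀ then 1 else 0)) * Ppow P k z x
        = (u z * Ppow P k z x + f z * Ppow P k z x)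
          - (N * (if z = x₀ then 1 else 0)) * Ppow P k z x := by intro z; ring
    rw [tsum_congr hsplit, Summable.tsum_sub (s1.add s2) s3, Summable.tsum_add s1 s2]
    congr 1
    · congr 1
      rw [tsum_eq_sum (s := F) (fun z hz => by rw [huF z hz, zero_mul])]
    · rw [tsum_eq_single x₀ (fun z hz => by simp [hz])]
      simp
  -- telescoping
  have hpartial : ∀ (K : ℕ) (x : V),
      (∑ k ∈ Finset.range K, (N * Ppow P k x₀ x - ∑' z, f z * Ppow P k z x))
        = u x - ∑ y ∈ F, u y * Ppow P K y x := by
    intro K x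
    induction K with
    | zero =>
      simp only [Finset.range_zero, Finset.sum_empty]
      have : (∑ y ∈ F, u y * Ppow P 0 y x) = u x := by
        have h1 : ∀ y, u y * Ppow P 0 y x = if y = x then u y else 0 := by
          intro y; by_cases h : y = x <;> simp [Ppow, h, eq_comm]
        rw [Finset.sum_congr rfl (fun y _ => h1 y), Finset.sum_ite_eq' F x u]
        by_cases h : x ∈ F
        · simp [h]
        · simp [h, huF x h]
      rw [this]; ring
    | succ K ih =>
      rw [Finset.sum_range_succ, ih, hrec K x]
      ring
  intro x
  -- limits
  have hgeo : Summable (fun k : ℕ => (1-δ)^k) := summable_geometric_of_lt_one hr0 hr1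
  have hsum1 : Summable (fun k => N * Ppow P k x₀ x) :=
    Summable.of_nonneg_of_le (fun k => mul_nonneg hN.le ((hPn k x₀).1 x))
      (fun k => mul_le_mul_of_nonneg_left (hPle k x₀ x) hN.le) (hgeo.mul_left N)
  have hsum2 : Summable (fun k => ∑' z, f z * Ppow P k z x) :=
    Summable.of_nonneg_of_le (fun k => (hfs k x).2.2) (fun k => (hfs k x).2.1)
      (hgeo.mul_left c')
  -- the partial sums converge to u x
  have htendA : Tendsto (fun K => ∑ y ∈ F, u y * Ppow P K y x) atTop (𝓝 0) := by
    have hub : ∀ K, (∑ y ∈ F, u y * Ppow P K y x) ≤ (∑ y ∈ F, u y) * (1-δ)^K := by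
      intro K
      rw [Finset.sum_mul]
      exact Finset.sum_le_sum fun y _ =>
        mul_le_mul_of_nonneg_left (hPle K y x) (hupos y)
    have hlb : ∀ K, 0 ≤ ∑ y ∈ F, u y * Ppow P K y x := fun K =>
      Finset.sum_nonneg fun y _ => mul_nonneg (hupos y) ((hPn K y).1 x)
    have htl : Tendsto (fun K : ℕ => (∑ y ∈ F, u y) * (1-δ)^K) atTop (𝓝 0) := by
      have := (tendsto_pow_atTop_nhds_zero_of_lt_one hr0 hr1).const_mul (∑ y ∈ F, u y)
      simpa using this
    exact squeeze_zero hlb hub htl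
  have hT1 : Tendsto (fun K => ∑ k ∈ Finset.range K,
      (N * Ppow P k x₀ x - ∑' z, f z * Ppow P k z x)) atTop
      (𝓝 ((∑' k, N * Ppow P k x₀ x) - ∑' k, ∑' z, f z * Ppow P k z x)) :=
    (hsum1.hasSum.sub hsum2.hasSum).tendsto_sum_nat
  have hT2 : Tendsto (fun K => u x - ∑ y ∈ F, u y * Ppow P K y x) atTop (𝓝 (u x)) := by
    have := (tendsto_const_nhds (x := u x) (f := atTop (α := ℕ))).sub htendA
    simpa using this
  have hEq : (∑' k, N * Ppow P k x₀ x) - (∑' k, ∑' z, f z * Ppow P k z x) = u x := by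
    apply tendsto_nhds_unique hT1
    rw [show (fun K => ∑ k ∈ Finset.range K,
      (N * Ppow P k x₀ x - ∑' z, f z * Ppow P k z x))
      = fun K => u x - ∑ y ∈ F, u y * Ppow P K y x from funext fun K => hpartial K x]
    exact hT2
  set B : ℝ := ∑' k, ∑' z, f z * Ppow P k z x with hBdef
  have hNpot : (∑' k, N * Ppow P k x₀ x) = N * pot P x₀ x := tsum_mul_left
  rw [hNpot] at hEq
  have hmain : pot P x₀ x - u x / N = B / N := by
    field_simp
    linarith
  have hB0 : 0 ≤ B := tsum_nonneg fun k => (hfs k x).2.2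
  have hBle : B ≤ c' / δ := by
    calc B ≤ ∑' k : ℕ, c' * (1-δ)^k :=
          Summable.tsum_le_tsum (fun k => (hfs k x).2.1) hsum2 (hgeo.mul_left c')
      _ = c' * (1 - (1-δ))⁻¹ := by rw [tsum_mul_left, tsum_geometric_of_lt_one hr0 hr1]
      _ = c' / δ := by rw [show (1:ℝ) - (1-δ) = δ by ring, div_eq_mul_inv]
  rw [hmain]
  constructor
  · exact div_nonneg hB0 hN.le
  · calc B / N ≤ (c' / δ) / N := div_le_div_of_nonneg_right hBle hN.le
      _ ≤ c' ^ 2 / (c * δ * N) := by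
          rw [div_div, div_le_div_iff₀ (by positivity) (by positivity)]
          nlinarith [mul_pos hδ0 hN, mul_pos (mul_pos hδ0 hN) hc', mul_le_mul_of_nonneg_left hcc' (mul_pos (mul_pos hδ0 hN) hc').le]
end

section
/- Let N > 0, x₀ ∈ V, let u : V → ℝ be finitely supported with u ≥ 0 and such that for every x either u(x) = 0 or u(x) ≥ D(x), and let f : V → ℝ satisfy 0 ≤ f(x) ≤ D(x) for all x. Suppose that for every x ∈ V, Σ_{y∈V} (ρ(x,y)/D(y))·u(y) − u(x) = f(x) − N·1_{x = x₀}. Then for every x ∈ V: if U(x₀,x) > c'²/(c δ N) then u(x) > 0, and if U(x₀,x) < c/N then u(x) = 0. -/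
open Filter Topology

section aux
open ENNReal

noncomputable def EE {V : Type*} [DecidableEq V] (Q : V → V → ℝ≥0∞) : ℕ → V → V → ℝ≥0∞
  | 0 => fun x y => if x = y then 1 else 0
  | n + 1 => fun x y => ∑' z, Q x z * EE Q n z y

lemma EE_row {V : Type*} [DecidableEq V] (Q : V → V → ℝ≥0∞) (r : ℝ≥0∞)
    (hr : ∀ x, ∑' y, Q x y ≤ r) : ∀ n x, ∑' y, EE Q n x y ≤ r ^ n := by
  intro n
  induction n with
  | zero =>
    intro x
    simp only [EE, pow_zero]
    rw [tsum_eq_single x (by intro y hy; simp [Ne.symm hy])]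
    simp
  | succ n ih =>
    intro x
    calc ∑' y, EE Q (n+1) x y = ∑' y, ∑' z, Q x z * EE Q n z y := rfl
    _ = ∑' z, ∑' y, Q x z * EE Q n z y := ENNReal.tsum_comm
    _ = ∑' z, Q x z * ∑' y, EE Q n z y := by
        exact tsum_congr fun z => ENNReal.tsum_mul_left
    _ ≤ ∑' z, Q x z * r ^ n := ENNReal.tsum_le_tsum fun z => mul_le_mul_right (ih z) _
    _ = (∑' z, Q x z) * r ^ n := ENNReal.tsum_mul_right
    _ ≤ r * r ^ n := mul_le_mul_left (hr x) _
    _ = r ^ (n+1) := (pow_succ' r n).symm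

lemma EE_succ' {V : Type*} [DecidableEq V] (Q : V → V → ℝ≥0∞) :
    ∀ n x y, EE Q (n+1) x y = ∑' z, EE Q n x z * Q z y := by
  intro n
  induction n with
  | zero =>
    intro x y
    show ∑' z, Q x z * EE Q 0 z y = _
    rw [tsum_eq_single y (by intro z hz; simp [EE, hz]),
        tsum_eq_single x (by intro z hz; simp [EE, Ne.symm hz])]
    simp [EE]
  | succ n ih =>
    intro x y
    calc EE Q (n+2) x y = ∑' z, Q x z * EE Q (n+1) z y := rfl
    _ = ∑' z, Q x z * ∑' w, EE Q n z w * Q w y := by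
        exact tsum_congr fun z => by rw [ih]
    _ = ∑' z, ∑' w, Q x z * (EE Q n z w * Q w y) := by
        exact tsum_congr fun z => ENNReal.tsum_mul_left.symm
    _ = ∑' w, ∑' z, Q x z * (EE Q n z w * Q w y) := ENNReal.tsum_comm
    _ = ∑' w, (∑' z, Q x z * EE Q n z w) * Q w y := by
        refine tsum_congr fun w => ?_
        rw [← ENNReal.tsum_mul_right]
        exact tsum_congr fun z => by ring
    _ = ∑' w, EE Q (n+1) x w * Q w y := rfl

lemma EE_rev {V : Type*} [DecidableEq V] (Q : V → V → ℝ≥0∞) (Dq : V → ℝ≥0∞)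
    (hsym : ∀ x y, Dq x * Q x y = Dq y * Q y x) :
    ∀ n x y, Dq x * EE Q n x y = Dq y * EE Q n y x := by
  intro n
  induction n with
  | zero =>
    intro x y
    by_cases h : x = y
    · subst h; rfl
    · simp [EE, h, Ne.symm h]
  | succ n ih =>
    intro x y
    calc Dq x * EE Q (n+1) x y = ∑' z, Dq x * (Q x z * EE Q n z y) := ENNReal.tsum_mul_left.symm
    _ = ∑' z, (Dq x * Q x z) * EE Q n z y := by exact tsum_congr fun z => by ring
    _ = ∑' z, (Dq z * Q z x) * EE Q n z y := by exact tsum_congr fun z => by rw [hsym]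
    _ = ∑' z, Q z x * (Dq z * EE Q n z y) := by exact tsum_congr fun z => by ring
    _ = ∑' z, Q z x * (Dq y * EE Q n y z) := by exact tsum_congr fun z => by rw [ih]
    _ = Dq y * ∑' z, EE Q n y z * Q z x := by
        rw [← ENNReal.tsum_mul_left]; exact tsum_congr fun z => by ring
    _ = Dq y * EE Q (n+1) y x := by rw [EE_succ']

section transfer
variable {V : Type*} [DecidableEq V] {P : V → V → ℝ} {s : ℝ}

lemma Qrow (hP0 : ∀ x y, 0 ≤ P x y) (hPsum : ∀ x, Summable (P x))
    (hProw : ∀ x, ∑' y, P x y ≤ s) (x : V) :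
    ∑' y, ENNReal.ofReal (P x y) ≤ ENNReal.ofReal s := by
  rw [← ENNReal.ofReal_tsum_of_nonneg (hP0 x) (hPsum x)]
  exact ENNReal.ofReal_le_ofReal (hProw x)

lemma EEfin (hP0 : ∀ x y, 0 ≤ P x y) (hPsum : ∀ x, Summable (P x))
    (hProw : ∀ x, ∑' y, P x y ≤ s) (n : ℕ) (x y : V) :
    EE (fun x y => ENNReal.ofReal (P x y)) n x y ≠ ⊤ :=
  ne_top_of_le_ne_top (pow_ne_top ofReal_ne_top)
    ((ENNReal.le_tsum y).trans (EE_row _ _ (Qrow hP0 hPsum hProw) n x))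

lemma EEsumfin (hP0 : ∀ x y, 0 ≤ P x y) (hPsum : ∀ x, Summable (P x))
    (hProw : ∀ x, ∑' y, P x y ≤ s) (n : ℕ) (x : V) :
    ∑' y, EE (fun x y => ENNReal.ofReal (P x y)) n x y ≠ ⊤ :=
  ne_top_of_le_ne_top (pow_ne_top ofReal_ne_top)
    (EE_row _ _ (Qrow hP0 hPsum hProw) n x)

lemma Ppow_eq_EE (hP0 : ∀ x y, 0 ≤ P x y) (hPsum : ∀ x, Summable (P x))
    (hProw : ∀ x, ∑' y, P x y ≤ s) :
    ∀ n x y, Ppow P n x y = (EE (fun x y => ENNReal.ofReal (P x y)) n x y).toReal := by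
  intro n
  induction n with
  | zero => intro x y; by_cases h : x = y <;> simp [Ppow, EE, h]
  | succ n ih =>
    intro x y
    calc Ppow P (n+1) x y = ∑' z, P x z * Ppow P n z y := rfl
    _ = ∑' z, ((fun x y => ENNReal.ofReal (P x y)) x z
          * EE (fun x y => ENNReal.ofReal (P x y)) n z y).toReal := by
        refine tsum_congr fun z => ?_
        rw [ih, ENNReal.toReal_mul, ENNReal.toReal_ofReal (hP0 x z)]
    _ = (∑' z, (fun x y => ENNReal.ofReal (P x y)) x z
          * EE (fun x y => ENNReal.ofReal (P x y)) n z y).toReal := by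
        rw [ENNReal.tsum_toReal_eq]
        exact fun z => ENNReal.mul_ne_top ofReal_ne_top (EEfin hP0 hPsum hProw n z y)
    _ = _ := rfl

lemma Ppow_nonneg (hP0 : ∀ x y, 0 ≤ P x y) (hPsum : ∀ x, Summable (P x))
    (hProw : ∀ x, ∑' y, P x y ≤ s) (n : ℕ) (x y : V) : 0 ≤ Ppow P n x y := by
  rw [Ppow_eq_EE hP0 hPsum hProw]; exact ENNReal.toReal_nonneg

lemma Ppow_summable (hP0 : ∀ x y, 0 ≤ P x y) (hPsum : ∀ x, Summable (P x))
    (hProw : ∀ x, ∑' y, P x y ≤ s) (n : ℕ) (x : V) :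
    Summable (fun y => Ppow P n x y) := by
  have := ENNReal.summable_toReal (EEsumfin hP0 hPsum hProw n x)
  refine this.congr fun y => ?_
  rw [Ppow_eq_EE hP0 hPsum hProw]

lemma Ppow_row (hP0 : ∀ x y, 0 ≤ P x y) (hPsum : ∀ x, Summable (P x))
    (hProw : ∀ x, ∑' y, P x y ≤ s) (hs : 0 ≤ s) (n : ℕ) (x : V) :
    ∑' y, Ppow P n x y ≤ s ^ n := by
  calc ∑' y, Ppow P n x y
      = ∑' y, (EE (fun x y => ENNReal.ofReal (P x y)) n x y).toReal :=
        tsum_congr fun y => Ppow_eq_EE hP0 hPsum hProw n x y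
    _ = (∑' y, EE (fun x y => ENNReal.ofReal (P x y)) n x y).toReal :=
        (ENNReal.tsum_toReal_eq fun y => EEfin hP0 hPsum hProw n x y).symm
    _ ≤ ((ENNReal.ofReal s) ^ n).toReal :=
        ENNReal.toReal_mono (pow_ne_top ofReal_ne_top) (EE_row _ _ (Qrow hP0 hPsum hProw) n x)
    _ = s ^ n := by rw [ENNReal.toReal_pow, ENNReal.toReal_ofReal hs]

lemma Ppow_entry_le (hP0 : ∀ x y, 0 ≤ P x y) (hPsum : ∀ x, Summable (P x))
    (hProw : ∀ x, ∑' y, P x y ≤ s) (hs : 0 ≤ s) (n : ℕ) (x y : V) :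
    Ppow P n x y ≤ s ^ n :=
  le_trans (Summable.le_tsum (Ppow_summable hP0 hPsum hProw n x) y
    (fun z _ => Ppow_nonneg hP0 hPsum hProw n x z)) (Ppow_row hP0 hPsum hProw hs n x)

lemma Ppow_succ' (hP0 : ∀ x y, 0 ≤ P x y) (hPsum : ∀ x, Summable (P x))
    (hProw : ∀ x, ∑' y, P x y ≤ s) (n : ℕ) (x y : V) :
    Ppow P (n+1) x y = ∑' z, Ppow P n x z * P z y := by
  calc Ppow P (n+1) x y
      = (EE (fun x y => ENNReal.ofReal (P x y)) (n+1) x y).toReal :=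
        Ppow_eq_EE hP0 hPsum hProw _ x y
    _ = (∑' z, EE (fun x y => ENNReal.ofReal (P x y)) n x z * ENNReal.ofReal (P z y)).toReal := by
        rw [EE_succ']
    _ = ∑' z, (EE (fun x y => ENNReal.ofReal (P x y)) n x z * ENNReal.ofReal (P z y)).toReal := by
        rw [ENNReal.tsum_toReal_eq]
        exact fun z => ENNReal.mul_ne_top (EEfin hP0 hPsum hProw n x z) ofReal_ne_top
    _ = ∑' z, Ppow P n x z * P z y := by
        refine tsum_congr fun z => ?_
        rw [ENNReal.toReal_mul, ENNReal.toReal_ofReal (hP0 z y),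
          Ppow_eq_EE hP0 hPsum hProw]

lemma Ppow_rev (hP0 : ∀ x y, 0 ≤ P x y) (hPsum : ∀ x, Summable (P x))
    (hProw : ∀ x, ∑' y, P x y ≤ s) (D : V → ℝ) (hD0 : ∀ x, 0 ≤ D x)
    (hsymR : ∀ x y, D x * P x y = D y * P y x) (n : ℕ) (x y : V) :
    D x * Ppow P n x y = D y * Ppow P n y x := by
  have key := EE_rev (fun x y => ENNReal.ofReal (P x y)) (fun x => ENNReal.ofReal (D x))
    (fun x y => by
      simp only [← ENNReal.ofReal_mul (hD0 _)]
      rw [hsymR]) n x y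
  have h1 : D x * Ppow P n x y
      = ((ENNReal.ofReal (D x)) * EE (fun x y => ENNReal.ofReal (P x y)) n x y).toReal := by
    rw [ENNReal.toReal_mul, ENNReal.toReal_ofReal (hD0 x), Ppow_eq_EE hP0 hPsum hProw]
  have h2 : D y * Ppow P n y x
      = ((ENNReal.ofReal (D y)) * EE (fun x y => ENNReal.ofReal (P x y)) n y x).toReal := by
    rw [ENNReal.toReal_mul, ENNReal.toReal_ofReal (hD0 y), Ppow_eq_EE hP0 hPsum hProw]
  rw [h1, h2, key]

end transfer
end aux

/-- Threshold dichotomy: if `U(x₀,x) > c'²/(c δ N)` then `x` is in the shape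
(`u(x) > 0`), and if `U(x₀,x) < c/N` then it is not (`u(x) = 0`). -/
theorem stmt10 {V : Type*} [Countable V] [DecidableEq V]
    (ρ : V → V → ℝ) (m2 : V → ℝ)
    (hsymm : ∀ x y, ρ x y = ρ y x)
    (hρ : ∀ x y, 0 ≤ ρ x y) (hdiag : ∀ x, ρ x x = 0)
    (hm2 : ∀ x, 0 ≤ m2 x)
    (hρsum : ∀ x, Summable (fun z => ρ x z))
    (D : V → ℝ) (hD : ∀ x, D x = (∑' z, ρ x z) + m2 x)
    (c c' δ : ℝ) (hc : 0 < c) (hcc' : c ≤ c') (hδ : δ ∈ Set.Ioo (0 : ℝ) 1)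
    (hDb : ∀ x, c ≤ D x ∧ D x ≤ c')
    (hm2δ : ∀ x, δ ≤ m2 x / D x)
    (P : V → V → ℝ) (hPdef : ∀ x y, P x y = ρ x y / D x)
    (N : ℝ) (hN : 0 < N) (x₀ : V)
    (u f : V → ℝ)
    (hufin : (Function.support u).Finite) (hupos : ∀ x, 0 ≤ u x)
    (huq : ∀ x, u x = 0 ∨ D x ≤ u x)
    (hfb : ∀ x, 0 ≤ f x ∧ f x ≤ D x)
    (heq : ∀ x, (∑' y, (ρ x y / D y) * u y) - u x = f x - N * (if x = x₀ then 1 else 0)) :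
    ∀ x, (pot P x₀ x > c' ^ 2 / (c * δ * N) → 0 < u x) ∧
      (pot P x₀ x < c / N → u x = 0) := by
  obtain ⟨hδ0, hδ1⟩ := hδ
  have hs0 : (0:ℝ) ≤ 1 - δ := by linarith
  have hs1 : (1:ℝ) - δ < 1 := by linarith
  have hDpos : ∀ x, 0 < D x := fun x => lt_of_lt_of_le hc (hDb x).1
  have hP0 : ∀ x y, 0 ≤ P x y := fun x y => by
    rw [hPdef]; exact div_nonneg (hρ x y) (hDpos x).le
  have hPsum : ∀ x, Summable (P x) := fun x =>
    ((hρsum x).div_const (D x)).congr fun y => (hPdef x y).symm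
  have hρD : ∀ x, ∑' y, ρ x y = D x - m2 x := fun x => by rw [hD]; ring
  have hρleD : ∀ x y, ρ x y ≤ D x := by
    intro x y
    have h1 : ρ x y ≤ ∑' z, ρ x z := Summable.le_tsum (hρsum x) y fun z _ => hρ x z
    have := hm2 x
    rw [hρD] at h1; linarith
  have hProw : ∀ x, ∑' y, P x y ≤ 1 - δ := by
    intro x
    have h1 : ∑' y, P x y = 1 - m2 x / D x := by
      rw [tsum_congr (fun y => hPdef x y), tsum_div_const, hρD, sub_div,
        div_self (hDpos x).ne']
    rw [h1]; linarith [hm2δ x]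
  have hPle1 : ∀ x y, P x y ≤ 1 := fun x y => by
    rw [hPdef]; exact (div_le_one (hDpos x)).mpr (hρleD x y)
  -- abbreviations for Ppow facts
  have pw0 := Ppow_nonneg hP0 hPsum hProw
  have pwS := Ppow_summable hP0 hPsum hProw
  have pwR := Ppow_row hP0 hPsum hProw hs0
  have pwE := Ppow_entry_le hP0 hPsum hProw hs0
  have pwSucc := Ppow_succ' hP0 hPsum hProw
  -- reversibility
  have hsymR : ∀ x y, D x * P x y = D y * P y x := by
    intro x y
    rw [hPdef, hPdef, mul_comm (D x), mul_comm (D y), div_mul_cancel₀ _ (hDpos x).ne',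
      div_mul_cancel₀ _ (hDpos y).ne', hsymm]
  have pwRev := Ppow_rev hP0 hPsum hProw D (fun x => (hDpos x).le) hsymR
  -- the normalized mass v
  set v : V → ℝ := fun y => u y / D y with hvdef
  have hv0 : ∀ y, 0 ≤ v y := fun y => div_nonneg (hupos y) (hDpos y).le
  set S : Finset V := hufin.toFinset with hSdef
  have hus : ∀ y ∉ S, u y = 0 := by
    intro y hy
    by_contra h
    exact hy (hufin.mem_toFinset.mpr h)
  have hvs : ∀ y ∉ S, v y = 0 := fun y hy => by
    simp only [hvdef]; rw [hus y hy, zero_div]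
  set C₁ : ℝ := ∑ y ∈ S, v y with hC₁def
  have hC₁0 : 0 ≤ C₁ := Finset.sum_nonneg fun y _ => hv0 y
  have hvle : ∀ y, v y ≤ C₁ := by
    intro y
    by_cases hy : y ∈ S
    · exact Finset.single_le_sum (fun z _ => hv0 z) hy
    · rw [hvs y hy]; exact hC₁0
  -- the source term g
  set g : V → ℝ := fun x => (N * (if x = x₀ then 1 else 0) - f x) / D x with hgdef
  -- the recursion v = Pv + g
  have hrec : ∀ x, v x = (∑' y, P x y * v y) + g x := by
    intro x
    have h1 : ∀ y, (ρ x y / D y) * u y = D x * (P x y * v y) := by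
      intro y
      have hdy := (hDpos y).ne'
      have h0 : D x * (ρ x y / D x) = ρ x y := by
        rw [mul_comm]; exact div_mul_cancel₀ _ (hDpos x).ne'
      rw [hPdef, ← mul_assoc, h0]
      show ρ x y / D y * u y = ρ x y * (u y / D y)
      ring
    have h2 : ∑' y, (ρ x y / D y) * u y = D x * ∑' y, P x y * v y := by
      rw [tsum_congr h1, tsum_mul_left]
    have h3 := heq x
    rw [h2] at h3
    have h4 : u x = D x * (∑' y, P x y * v y) + (N * (if x = x₀ then 1 else 0) - f x) := by
      linarith
    show u x / D x = _
    rw [h4, add_div, mul_div_cancel_left₀ _ (hDpos x).ne']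
  -- bounds on g
  have gb1 : ∀ y, g y ≤ (if y = x₀ then N / D x₀ else 0) := by
    intro y
    simp only [hgdef]
    by_cases hy : y = x₀
    · subst hy
      simp only [if_pos rfl, mul_one]
      have hd := hDpos y
      simp only [if_true, mul_one]
      gcongr
      linarith [(hfb y).1]
    · simp only [if_neg hy, mul_zero, zero_sub]
      exact div_nonpos_of_nonpos_of_nonneg (by linarith [(hfb y).1]) (hDpos y).le
  have gb2 : ∀ y, (if y = x₀ then N / D x₀ else 0) - 1 ≤ g y := by
    intro y
    simp only [hgdef]
    by_cases hy : y = x₀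
    · subst hy
      simp only [if_pos rfl, mul_one]
      have hd := hDpos y
      simp only [if_true, mul_one]
      have h1 : N / D y - 1 = (N - D y) / D y := by
        field_simp
      rw [h1]
      gcongr
      linarith [(hfb y).2]
    · simp only [if_neg hy, mul_zero, zero_sub]
      rw [neg_div]
      exact neg_le_neg ((div_le_one (hDpos y)).mpr (hfb y).2)
  -- bounds on |g|
  set C₂ : ℝ := N / c + 1 with hC₂def
  have hgub : ∀ y, g y ≤ C₂ := by
    intro y
    refine (gb1 y).trans ?_
    have h0 : 0 ≤ N / c := div_nonneg hN.le hc.le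
    by_cases hy : y = x₀
    · simp only [if_pos hy]
      have h2 : N / D x₀ ≤ N / c :=
        div_le_div_of_nonneg_left hN.le hc (hDb x₀).1
      simp only [hC₂def]; linarith
    · simp only [if_neg hy, hC₂def]; linarith
  have hglb : ∀ y, -C₂ ≤ g y := by
    intro y
    refine le_trans ?_ (gb2 y)
    have h0 : 0 ≤ N / c := div_nonneg hN.le hc.le
    by_cases hy : y = x₀
    · simp only [if_pos hy]
      have h1 : 0 ≤ N / D x₀ := div_nonneg hN.le (hDpos x₀).le
      simp only [hC₂def]; linarith
    · simp only [if_neg hy, hC₂def]; linarith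
  -- summability of the W-terms
  have hWsum : ∀ n x, Summable (fun y => Ppow P n x y * g y) := by
    intro n x
    rw [← summable_abs_iff]
    refine Summable.of_nonneg_of_le (fun y => abs_nonneg _) (fun y => ?_)
      ((pwS n x).mul_right C₂)
    rw [abs_mul, abs_of_nonneg (pw0 n x y)]
    exact mul_le_mul_of_nonneg_left (abs_le.mpr ⟨hglb y, hgub y⟩) (pw0 n x y)
  -- the T-terms are finite sums
  have hTsum : ∀ n x, Summable (fun y => Ppow P n x y * v y) := fun n x =>
    summable_of_ne_finset_zero (s := S) fun y hy => by rw [hvs y hy, mul_zero]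
  have hTfin : ∀ n x, ∑' y, Ppow P n x y * v y = ∑ y ∈ S, Ppow P n x y * v y := fun n x =>
    tsum_eq_sum fun y hy => by rw [hvs y hy, mul_zero]
  have hT0 : ∀ x, ∑' y, Ppow P 0 x y * v y = v x := by
    intro x
    rw [tsum_eq_single x (fun y hy => by
      have hxy : x ≠ y := fun h => hy h.symm
      simp [Ppow, hxy])]
    simp [Ppow]
  -- one step of the recursion applied under T
  have hstep : ∀ n x, (∑' y, Ppow P n x y * v y)
      = (∑' y, Ppow P (n+1) x y * v y) + ∑' y, Ppow P n x y * g y := by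
    intro n x
    have hA : ∀ y, Ppow P n x y * v y
        = Ppow P n x y * (∑ z ∈ S, P y z * v z) + Ppow P n x y * g y := by
      intro y
      rw [← mul_add]
      congr 1
      rw [hrec y]
      congr 1
      exact tsum_eq_sum fun z hz => by rw [hvs z hz, mul_zero]
    have hsum1 : ∀ z, Summable fun y => Ppow P n x y * (P y z * v z) := by
      intro z
      refine Summable.of_nonneg_of_le
        (fun y => mul_nonneg (pw0 n x y) (mul_nonneg (hP0 y z) (hv0 z)))
        (fun y => ?_) ((pwS n x).mul_right (v z))
      exact mul_le_mul_of_nonneg_left (mul_le_of_le_one_left (hv0 z) (hPle1 y z)) (pw0 n x y)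
    have hsum2 : Summable fun y => Ppow P n x y * (∑ z ∈ S, P y z * v z) := by
      refine Summable.of_nonneg_of_le (fun y => ?_) (fun y => ?_) ((pwS n x).mul_right C₁)
      · exact mul_nonneg (pw0 n x y)
          (Finset.sum_nonneg fun z _ => mul_nonneg (hP0 y z) (hv0 z))
      · refine mul_le_mul_of_nonneg_left ?_ (pw0 n x y)
        calc ∑ z ∈ S, P y z * v z ≤ ∑ z ∈ S, v z :=
              Finset.sum_le_sum fun z _ => mul_le_of_le_one_left (hv0 z) (hPle1 y z)
          _ = C₁ := rfl
    calc ∑' y, Ppow P n x y * v y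
        = ∑' y, (Ppow P n x y * (∑ z ∈ S, P y z * v z) + Ppow P n x y * g y) := tsum_congr hA
      _ = (∑' y, Ppow P n x y * (∑ z ∈ S, P y z * v z)) + ∑' y, Ppow P n x y * g y :=
          Summable.tsum_add hsum2 (hWsum n x)
      _ = (∑' y, ∑ z ∈ S, Ppow P n x y * (P y z * v z)) + ∑' y, Ppow P n x y * g y := by
          congr 1
          exact tsum_congr fun y => Finset.mul_sum _ _ _
      _ = (∑ z ∈ S, ∑' y, Ppow P n x y * (P y z * v z)) + ∑' y, Ppow P n x y * g y := by
          congr 1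
          exact Summable.tsum_finsetSum fun z _ => hsum1 z
      _ = (∑ z ∈ S, Ppow P (n+1) x z * v z) + ∑' y, Ppow P n x y * g y := by
          congr 1
          refine Finset.sum_congr rfl fun z _ => ?_
          rw [pwSucc n x z, ← tsum_mul_right]
          exact tsum_congr fun y => by ring
      _ = (∑' y, Ppow P (n+1) x y * v y) + ∑' y, Ppow P n x y * g y := by
          rw [hTfin (n+1) x]
  -- telescoping
  have htel : ∀ (n : ℕ) x, v x = (∑' y, Ppow P n x y * v y)
      + ∑ k ∈ Finset.range n, ∑' y, Ppow P k x y * g y := by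
    intro n
    induction n with
    | zero => intro x; simp [hT0 x]
    | succ n ih =>
      intro x
      have h := ih x
      rw [hstep n x] at h
      rw [h, Finset.sum_range_succ]
      ring
  -- bounds on the T-terms
  have hT0b : ∀ (n : ℕ) x, 0 ≤ ∑' y, Ppow P n x y * v y := fun n x =>
    tsum_nonneg fun y => mul_nonneg (pw0 n x y) (hv0 y)
  have hTub : ∀ (n : ℕ) x, ∑' y, Ppow P n x y * v y ≤ C₁ * (1-δ)^n := by
    intro n x
    rw [hTfin n x]
    calc ∑ y ∈ S, Ppow P n x y * v y ≤ ∑ y ∈ S, Ppow P n x y * C₁ :=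
        Finset.sum_le_sum fun y _ => mul_le_mul_of_nonneg_left (hvle y) (pw0 n x y)
    _ = (∑ y ∈ S, Ppow P n x y) * C₁ := (Finset.sum_mul _ _ _).symm
    _ ≤ (1-δ)^n * C₁ := by
        refine mul_le_mul_of_nonneg_right ?_ hC₁0
        exact (Summable.sum_le_tsum S (fun y _ => pw0 n x y) (pwS n x)).trans (pwR n x)
    _ = C₁ * (1-δ)^n := mul_comm _ _
  -- bounds on the W-terms
  have hIteS : ∀ (n : ℕ) x, Summable fun y => Ppow P n x y * (if y = x₀ then N / D x₀ else 0) := by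
    intro n x
    refine summable_of_ne_finset_zero (s := {x₀}) fun y hy => ?_
    simp only [Finset.mem_singleton] at hy
    simp [hy]
  have hIteV : ∀ (n : ℕ) x, (∑' y, Ppow P n x y * (if y = x₀ then N / D x₀ else 0))
      = Ppow P n x x₀ * (N / D x₀) := by
    intro n x
    rw [tsum_eq_single x₀ (fun y hy => by simp [hy])]
    simp
  have hWub : ∀ (n : ℕ) x, (∑' y, Ppow P n x y * g y) ≤ Ppow P n x x₀ * (N / D x₀) := by
    intro n x
    rw [← hIteV n x]
    exact Summable.tsum_le_tsum (fun y => mul_le_mul_of_nonneg_left (gb1 y) (pw0 n x y))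
      (hWsum n x) (hIteS n x)
  have hWlb : ∀ (n : ℕ) x, Ppow P n x x₀ * (N / D x₀) - (1-δ)^n
      ≤ ∑' y, Ppow P n x y * g y := by
    intro n x
    have hdiff : Summable fun y =>
        Ppow P n x y * (if y = x₀ then N / D x₀ else 0) - Ppow P n x y :=
      (hIteS n x).sub (pwS n x)
    have key : ∀ y, Ppow P n x y * (if y = x₀ then N / D x₀ else 0) - Ppow P n x y
        ≤ Ppow P n x y * g y := by
      intro y
      have h := mul_le_mul_of_nonneg_left (gb2 y) (pw0 n x y)
      calc Ppow P n x y * (if y = x₀ then N / D x₀ else 0) - Ppow P n x y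
          = Ppow P n x y * ((if y = x₀ then N / D x₀ else 0) - 1) := by ring
        _ ≤ Ppow P n x y * g y := h
    calc Ppow P n x x₀ * (N / D x₀) - (1-δ)^n
        ≤ (∑' y, Ppow P n x y * (if y = x₀ then N / D x₀ else 0)) - ∑' y, Ppow P n x y := by
          rw [hIteV n x]
          exact sub_le_sub_left (pwR n x) _
      _ = ∑' y, (Ppow P n x y * (if y = x₀ then N / D x₀ else 0) - Ppow P n x y) :=
          (Summable.tsum_sub (hIteS n x) (pwS n x)).symm
      _ ≤ ∑' y, Ppow P n x y * g y := Summable.tsum_le_tsum key hdiff (hWsum n x)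
  -- the potential is a convergent series
  have hpotS : ∀ x y, Summable fun n => Ppow P n x y := fun x y =>
    Summable.of_nonneg_of_le (fun n => pw0 n x y) (fun n => pwE n x y)
      (summable_geometric_of_lt_one hs0 hs1)
  have hpot0 : ∀ x y, 0 ≤ pot P x y := fun x y => tsum_nonneg fun n => pw0 n x y
  have hND0 : 0 ≤ N / D x₀ := div_nonneg hN.le (hDpos x₀).le
  -- upper bound for v
  have hub : ∀ x, v x ≤ pot P x x₀ * (N / D x₀) := by
    intro x
    have hbnd : ∀ n : ℕ, v x ≤ C₁ * (1-δ)^n + pot P x x₀ * (N / D x₀) := by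
      intro n
      rw [htel n x]
      have h1 : ∑ k ∈ Finset.range n, ∑' y, Ppow P k x y * g y
          ≤ pot P x x₀ * (N / D x₀) :=
        calc ∑ k ∈ Finset.range n, ∑' y, Ppow P k x y * g y
            ≤ ∑ k ∈ Finset.range n, Ppow P k x x₀ * (N / D x₀) :=
              Finset.sum_le_sum fun k _ => hWub k x
          _ = (∑ k ∈ Finset.range n, Ppow P k x x₀) * (N / D x₀) := (Finset.sum_mul _ _ _).symm
          _ ≤ pot P x x₀ * (N / D x₀) :=
              mul_le_mul_of_nonneg_right
                (Summable.sum_le_tsum _ (fun k _ => pw0 k x x₀) (hpotS x x₀)) hND0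
      linarith [hTub n x]
    have hlim : Tendsto (fun n : ℕ => C₁ * (1-δ)^n + pot P x x₀ * (N / D x₀)) atTop
        (𝓝 (C₁ * 0 + pot P x x₀ * (N / D x₀))) :=
      ((tendsto_pow_atTop_nhds_zero_of_lt_one hs0 hs1).const_mul C₁).add tendsto_const_nhds
    have := ge_of_tendsto' hlim hbnd
    simpa using this
  -- lower bound for v
  have hlb : ∀ x, pot P x x₀ * (N / D x₀) - δ⁻¹ ≤ v x := by
    intro x
    have hb : ∀ n : ℕ, (∑ k ∈ Finset.range n, Ppow P k x x₀) * (N / D x₀) - δ⁻¹ ≤ v x := by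
      intro n
      rw [htel n x]
      have h1 : ∑ k ∈ Finset.range n, (Ppow P k x x₀ * (N / D x₀) - (1-δ)^k)
          ≤ ∑ k ∈ Finset.range n, ∑' y, Ppow P k x y * g y :=
        Finset.sum_le_sum fun k _ => hWlb k x
      have h2 : ∑ k ∈ Finset.range n, (1-δ)^k ≤ δ⁻¹ := by
        have h3 := Summable.sum_le_tsum (Finset.range n) (fun k _ => by positivity)
          (summable_geometric_of_lt_one hs0 hs1)
        have h4 : (1 - (1 - δ))⁻¹ = δ⁻¹ := by norm_num
        rwa [tsum_geometric_of_lt_one hs0 hs1, h4] at h3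
      rw [Finset.sum_sub_distrib, ← Finset.sum_mul] at h1
      linarith [hT0b n x]
    have hlim2 : Tendsto (fun n : ℕ => (∑ k ∈ Finset.range n, Ppow P k x x₀) * (N / D x₀) - δ⁻¹)
        atTop (𝓝 (pot P x x₀ * (N / D x₀) - δ⁻¹)) :=
      (((hpotS x x₀).hasSum.tendsto_sum_nat).mul_const _).sub tendsto_const_nhds
    exact le_of_tendsto' hlim2 hb
  -- reversibility of the potential
  have hpotrev : ∀ x, D x * pot P x x₀ = D x₀ * pot P x₀ x := by
    intro x
    calc D x * pot P x x₀ = ∑' n, D x * Ppow P n x x₀ := tsum_mul_left.symm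
    _ = ∑' n, D x₀ * Ppow P n x₀ x := tsum_congr fun n => pwRev n x x₀
    _ = D x₀ * pot P x₀ x := tsum_mul_left
  -- final conclusions
  intro x
  have hA0 : 0 ≤ pot P x₀ x := hpot0 x₀ x
  have hdx := hDpos x
  have hdx0 := hDpos x₀
  have hNA : pot P x x₀ * (N / D x₀) = N * pot P x₀ x / D x := by
    have h1 : pot P x x₀ = D x₀ * pot P x₀ x / D x := by
      rw [eq_div_iff hdx.ne', mul_comm]
      exact hpotrev x
    rw [h1]
    field_simp
  constructor
  · intro hgt
    have h2 := hlb x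
    rw [hNA] at h2
    have hc'0 : 0 < c' := lt_of_lt_of_le hc hcc'
    have hcδ : 0 < c * δ := mul_pos hc hδ0
    have e1 : N * pot P x₀ x / c' ≤ N * pot P x₀ x / D x :=
      div_le_div_of_nonneg_left (mul_nonneg hN.le hA0) hdx (hDb x).2
    have e2 : c' ^ 2 / (c * δ) < N * pot P x₀ x := by
      have h3 := mul_lt_mul_of_pos_left hgt hN
      have h4 : N * (c' ^ 2 / (c * δ * N)) = c' ^ 2 / (c * δ) := by
        field_simp
      rwa [h4] at h3
    have e3 : c' ^ 2 / (c * δ) / c' = c' / (c * δ) := by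
      field_simp
    have e4 : c' ^ 2 / (c * δ) / c' < N * pot P x₀ x / c' :=
      (div_lt_div_iff_of_pos_right hc'0).mpr e2
    have e5 : δ⁻¹ ≤ c' / (c * δ) := by
      have e6 : δ⁻¹ = c / (c * δ) := by field_simp
      rw [e6]
      exact div_le_div_of_nonneg_right hcc' hcδ.le
    have hvpos : 0 < v x := by
      rw [e3] at e4
      linarith
    have hux : u x = v x * D x := (div_mul_cancel₀ (u x) hdx.ne').symm
    rw [hux]
    exact mul_pos hvpos hdx
  · intro hlt
    have h2 := hub x
    rw [hNA] at h2
    have h3 : N * pot P x₀ x / D x ≤ N * pot P x₀ x / c :=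
      div_le_div_of_nonneg_left (mul_nonneg hN.le hA0) hc (hDb x).1
    have h4 : N * pot P x₀ x / c < 1 := by
      rw [div_lt_one hc]
      have h5 := (lt_div_iff₀ hN).mp hlt
      linarith [h5]
    have hvlt : v x < 1 := by linarith
    rcases huq x with h | h
    · exact h
    · exfalso
      have h6 : (1:ℝ) ≤ v x := by
        show (1:ℝ) ≤ u x / D x
        rw [le_div_iff₀ hdx]
        linarith
      linarith
end

section
/- Assume the strong regularity assumption: there is a constant C > 0 such that dist₁(ts, S) ≤ C for every admissible direction s and every t > 0. Fix α, β > 0 and let (S_N)_{N≥2} be subsets of ℝ^d with {x ∈ S : f(x) > α/N} ⊆ S_N ⊆ {x ∈ S : f(x) ≥ β/N} for every N. Then the convergence is uniform: sup{ dist₁(rs, (1/log N)·S_N) : s admissible, 0 ≤ r ≤ 1/(γ(s)·s) } → 0 as N → ∞. -/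
open Filter Topology Pointwise

/-- A direction `s` on the unit `ℓ¹` sphere is admissible for `S` if some sequence of `S`
goes to infinity with normalized terms converging to `s`. -/
def Admissible {d : ℕ} (S : Set (PiLp 1 (fun _ : Fin d => ℝ)))
    (s : PiLp 1 (fun _ : Fin d => ℝ)) : Prop :=
  ‖s‖ = 1 ∧ ∃ y : ℕ → PiLp 1 (fun _ : Fin d => ℝ), (∀ n, y n ∈ S) ∧
    Filter.Tendsto (fun n => ‖y n‖) Filter.atTop Filter.atTop ∧
    Filter.Tendsto (fun n => ‖y n‖⁻¹ • y n) Filter.atTop (nhds s)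

lemma aux_exp (p B : ℝ) (hp : 0 < p) : ∀ᶠ u : ℝ in atTop, B * u ≤ Real.exp (p * u) := by
  have h0 : Tendsto (fun x : ℝ => Real.exp x / x) atTop atTop := by
    simpa using Real.tendsto_exp_div_pow_atTop 1
  have h1 : Tendsto (fun u : ℝ => Real.exp (p * u) / (p * u)) atTop atTop :=
    h0.comp (tendsto_id.const_mul_atTop hp)
  filter_upwards [h1.eventually_ge_atTop (B / p), eventually_gt_atTop 0] with u h hu
  have hpu : 0 < p * u := by positivity
  have := (div_le_div_iff₀ hp hpu).mp (by simpa [div_div] using h)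
  nlinarith

lemma aux_dotp_smul {d : ℕ} (y : PiLp 1 (fun _ : Fin d => ℝ)) (hy : y ≠ 0)
    (w : PiLp 1 (fun _ : Fin d => ℝ)) :
    dotp y w = ‖y‖ * dotp w (‖y‖⁻¹ • y) := by
  have hn : (‖y‖ : ℝ) ≠ 0 := norm_ne_zero_iff.mpr hy
  unfold dotp
  rw [Finset.mul_sum]
  apply Finset.sum_congr rfl
  intro j _
  have : (‖y‖⁻¹ • y) j = ‖y‖⁻¹ * y j := rfl
  rw [this]
  field_simp

set_option maxHeartbeats 4000000 in
/-- Under the strong regularity assumption, the convergence of the rescaled sandpile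
`(1/log N)·S_N` to the limit shape is uniform over admissible directions `s` and radii
`0 ≤ r ≤ 1/(γ(s)·s)`. -/
theorem stmt16 {d : ℕ} (hd : 1 ≤ d)
    (c : PiLp 1 (fun _ : Fin d => ℝ) → ℝ)
    (γ : PiLp 1 (fun _ : Fin d => ℝ) → PiLp 1 (fun _ : Fin d => ℝ))
    (hc : ContinuousOn c {s : PiLp 1 (fun _ : Fin d => ℝ) | ‖s‖ = 1})
    (hγ : ContinuousOn γ {s : PiLp 1 (fun _ : Fin d => ℝ) | ‖s‖ = 1})
    (hcpos : ∀ s : PiLp 1 (fun _ : Fin d => ℝ), ‖s‖ = 1 → 0 < c s)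
    (hγpos : ∀ s : PiLp 1 (fun _ : Fin d => ℝ), ‖s‖ = 1 → 0 < dotp (γ s) s)
    (f : PiLp 1 (fun _ : Fin d => ℝ) → ℝ)
    (hf : ∀ ε > (0 : ℝ), ∃ R > (0 : ℝ), ∀ z : PiLp 1 (fun _ : Fin d => ℝ), ‖z‖ > R →
      |f z * (c (‖z‖⁻¹ • z))⁻¹ * Real.sqrt ‖z‖ *
        Real.exp (dotp z (γ (‖z‖⁻¹ • z))) - 1| ≤ ε)
    (S : Set (PiLp 1 (fun _ : Fin d => ℝ)))
    (C : ℝ) (hC : 0 < C)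
    (hreg : ∀ s, Admissible S s → ∀ t > (0 : ℝ), Metric.infDist (t • s) S ≤ C)
    (α β : ℝ) (hα : 0 < α) (hβ : 0 < β)
    (SN : ℕ → Set (PiLp 1 (fun _ : Fin d => ℝ)))
    (hSN : ∀ N : ℕ, 2 ≤ N →
      {x ∈ S | f x > α / N} ⊆ SN N ∧ SN N ⊆ {x ∈ S | f x ≥ β / N}) :
    ∀ ε > (0 : ℝ), ∃ N₀ : ℕ, ∀ N : ℕ, N₀ ≤ N →
      ∀ s, Admissible S s → ∀ r : ℝ, 0 ≤ r → r ≤ 1 / dotp (γ s) s →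
        Metric.infDist (r • s) ((Real.log N)⁻¹ • SN N) ≤ ε := by
  intro ε hε
  by_cases hA : ∃ s₀, Admissible S s₀
  swap
  · exact ⟨0, fun N _ s hs => absurd ⟨s, hs⟩ hA⟩
  obtain ⟨s₀, hs₀⟩ := hA
  set Sph : Set (PiLp 1 (fun _ : Fin d => ℝ)) := {s : PiLp 1 (fun _ : Fin d => ℝ) | ‖s‖ = 1}
    with hSph_def
  have hSphEq : Sph = Metric.sphere (0 : PiLp 1 (fun _ : Fin d => ℝ)) 1 := by
    ext x; simp [hSph_def, Metric.mem_sphere, dist_zero_right]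
  have hcomp : IsCompact Sph := hSphEq ▸ isCompact_sphere 0 1
  have hne : Sph.Nonempty := ⟨s₀, by simp only [hSph_def, Set.mem_setOf_eq]; exact hs₀.1⟩
  set g : PiLp 1 (fun _ : Fin d => ℝ) → ℝ := fun u => dotp (γ u) u with hg_def
  have hg : ContinuousOn g Sph := by
    rw [hSph_def]
    unfold g dotp
    apply continuousOn_finset_sum
    intro j _
    apply ContinuousOn.mul
    · exact ((continuous_apply j).comp (PiLp.continuous_ofLp 1 _)).comp_continuousOn hγ
    · exact ((continuous_apply j).comp (PiLp.continuous_ofLp 1 _)).continuousOn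
  obtain ⟨sm, hsm, hmin⟩ := hcomp.exists_isMinOn hne hg
  obtain ⟨sM, hsM, hmax⟩ := hcomp.exists_isMaxOn hne hg
  set m : ℝ := g sm with hm_def
  set M : ℝ := g sM with hM_def
  have hm : 0 < m := hγpos sm hsm
  have hmM : m ≤ M := hmin hsM
  have hM : 0 < M := lt_of_lt_of_le hm hmM
  obtain ⟨sc, hsc, hcmin⟩ := hcomp.exists_isMinOn hne (hc.mono (by rw [hSph_def]))
  set c₀ : ℝ := c sc with hc0_def
  have hc₀ : 0 < c₀ := hcpos sc hsc
  -- parameters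
  set δ : ℝ := min (ε / 2) (1 / (3 * M)) with hδ_def
  have hδ : 0 < δ := lt_min (by linarith) (by positivity)
  have hδε : δ ≤ ε / 2 := min_le_left _ _
  have hδM : δ ≤ 1 / (3 * M) := min_le_right _ _
  set δ₂ : ℝ := δ * m ^ 2 / 2 with hδ₂_def
  have hδ₂ : 0 < δ₂ := by
    have := mul_pos hδ (pow_pos hm 2)
    rw [hδ₂_def]; linarith
  -- uniform continuity of g on the sphere
  have hUC := Metric.uniformContinuousOn_iff.mp
    (hcomp.uniformContinuousOn_of_continuous hg) δ₂ hδ₂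
  obtain ⟨δ₃, hδ₃, hUC⟩ := hUC
  -- the asymptotics of f
  obtain ⟨R, hR, hfR⟩ := hf (1 / 2) (by norm_num)
  set C' : ℝ := 2 * C with hC'_def
  have hC' : 0 < C' := by rw [hC'_def]; linarith
  set p : ℝ := δ * m / 2 with hp_def
  have hp : 0 < p := by
    have := mul_pos hδ hm
    rw [hp_def]; linarith
  set K : ℝ := C' * (M + δ₂) with hK_def
  set B : ℝ := (2 * α / c₀) * Real.exp K with hB_def
  have hB : 0 < B := mul_pos (div_pos (by linarith) hc₀) (Real.exp_pos K)
  set B₂ : ℝ := (B + 1) * (1 / m) + (B + 1) * C' with hB₂_def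
  clear_value B₂ B K p C' δ₂ δ c₀ M m
  -- eventual conditions on u = log N
  have hEv : ∀ᶠ u : ℝ in atTop, 1 ≤ u ∧ 2 * C' ≤ ε * u ∧ R + 2 * C' ≤ δ * u ∧
      C' + 4 * C' / δ₃ ≤ δ * u ∧ 1 ≤ (1 / m) * u + C' ∧
      (B + 1) * ((1 / m) * u + C') ≤ Real.exp (p * u) := by
    filter_upwards [eventually_ge_atTop (1 : ℝ),
      eventually_ge_atTop (2 * C' / ε),
      eventually_ge_atTop ((R + 2 * C') / δ),
      eventually_ge_atTop ((C' + 4 * C' / δ₃) / δ),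
      aux_exp p B₂ hp, eventually_ge_atTop m] with u h1 h2 h3 h4 h5 h6m
    refine ⟨h1, ?_, ?_, ?_, ?_, ?_⟩
    · rw [div_le_iff₀ hε] at h2; linarith [mul_comm u ε]
    · rw [div_le_iff₀ hδ] at h3; linarith [mul_comm u δ]
    · rw [div_le_iff₀ hδ] at h4; linarith [mul_comm u δ]
    · have h7 : (1 / m) * m ≤ (1 / m) * u :=
        mul_le_mul_of_nonneg_left h6m (le_of_lt (one_div_pos.mpr hm))
      have h8 : (1 / m) * m = 1 := by field_simp
      linarith
    · have hBm : (0:ℝ) ≤ (B + 1) * C' := le_of_lt (mul_pos (by linarith) hC')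
      have h6 : (B + 1) * C' * 1 ≤ (B + 1) * C' * u :=
        mul_le_mul_of_nonneg_left h1 hBm
      have h7 : (B + 1) * ((1 / m) * u + C') ≤ B₂ * u := by
        rw [hB₂_def]
        nlinarith [h6]
      linarith [h5]
  obtain ⟨u₀, hu₀⟩ := eventually_atTop.mp hEv
  -- choose N₀
  have hlog : Tendsto (fun N : ℕ => Real.log N) atTop atTop :=
    Real.tendsto_log_atTop.comp tendsto_natCast_atTop_atTop
  obtain ⟨N₁, hN₁⟩ := eventually_atTop.mp (hlog.eventually_ge_atTop u₀)
  refine ⟨max N₁ 2, ?_⟩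
  intro N hN s hs r hr0 hr1
  have hN2 : 2 ≤ N := le_trans (le_max_right _ _) hN
  have hNpos : (0 : ℝ) < N := by positivity
  set u : ℝ := Real.log N with hu_def
  obtain ⟨hu1, huε, huR, huδ₃, huL, huexp⟩ := hu₀ u (hN₁ N (le_trans (le_max_left _ _) hN))
  have hu : 0 < u := by linarith
  have hs1 : ‖s‖ = 1 := hs.1
  have hsSph : s ∈ Sph := hs1
  have hgs_lb : m ≤ g s := by rw [hm_def]; exact hmin hsSph
  have hgs_ub : g s ≤ M := by rw [hM_def]; exact hmax hsSph
  have hgs : 0 < g s := lt_of_lt_of_le hm hgs_lb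
  -- the modified radius r'
  set r' : ℝ := max δ (min r (1 / g s - δ)) with hr'_def
  have h2δ : 2 * δ ≤ 1 / g s := by
    have h1 : 1 / M ≤ 1 / g s := by
      apply one_div_le_one_div_of_le hgs hgs_ub
    have h0 : 2 * δ ≤ 2 * (1 / (3 * M)) := by linarith
    have h0' : 2 * (1 / (3 * M)) = 2 / (3 * M) := by ring
    have h2 : 2 / (3 * M) ≤ 1 / M := by
      rw [div_le_div_iff₀ (by linarith : (0:ℝ) < 3 * M) hM]; linarith [hM]
    linarith
  have hr'1 : δ ≤ r' := le_max_left _ _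
  have hr'2 : r' ≤ 1 / g s - δ := max_le (by linarith) (min_le_right _ _)
  have hrr' : |r - r'| ≤ δ := by
    rw [abs_le]
    constructor
    · -- -δ ≤ r - r' i.e. r' ≤ r + δ
      have h1 : r' ≤ max δ r := by
        rw [hr'_def]
        exact max_le_max le_rfl (min_le_left _ _)
      rcases max_cases δ r with ⟨h, _⟩ | ⟨h, _⟩ <;> rw [h] at h1 <;> linarith
    · -- r - r' ≤ δ : r' ≥ min r (1/gs - δ) ≥ r - δ since r ≤ 1/gs
      have h1 : min r (1 / g s - δ) ≤ r' := by
        rw [hr'_def]; exact le_max_right _ _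
      have hrg : r ≤ 1 / g s := by simp only [hg_def]; exact hr1
      rcases min_cases r (1 / g s - δ) with ⟨h, _⟩ | ⟨h, _⟩ <;> rw [h] at h1 <;> linarith
  set t : ℝ := r' * u with ht_def
  clear_value t r' u
  have ht : 0 < t := by rw [ht_def]; exact mul_pos (lt_of_lt_of_le hδ hr'1) hu
  -- find a point y of S close to t • s
  have hSne : S.Nonempty := by
    obtain ⟨_, y, hy, _, _⟩ := hs
    exact ⟨y 0, hy 0⟩
  have hinf : Metric.infDist (t • s) S < C' := lt_of_le_of_lt (hreg s hs t ht) (by linarith)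
  obtain ⟨y, hyS, hyd⟩ := (Metric.infDist_lt_iff hSne).mp hinf
  have hyt : ‖t • s - y‖ ≤ C' := by
    rw [dist_eq_norm] at hyd; linarith
  have hts_norm : ‖t • s‖ = t := by
    rw [norm_smul, hs1, Real.norm_eq_abs, abs_of_pos ht, mul_one]
  have hty : |‖y‖ - t| ≤ C' := by
    have := abs_norm_sub_norm_le y (t • s)
    rw [hts_norm] at this
    have h2 : ‖y - t • s‖ = ‖t • s - y‖ := norm_sub_rev _ _
    linarith [this, h2 ▸ hyt]
  rw [abs_le] at hty
  have h_y_lb : t - C' ≤ ‖y‖ := by linarith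
  have h_y_ub : ‖y‖ ≤ t + C' := by linarith
  have htδu : δ * u ≤ t := by
    rw [ht_def]; exact mul_le_mul_of_nonneg_right hr'1 hu.le
  have hyR : ‖y‖ > R := by linarith
  have hy0 : y ≠ 0 := by
    intro h
    rw [h, norm_zero] at hyR
    linarith
  have hynorm : 0 < ‖y‖ := norm_pos_iff.mpr hy0
  set w : PiLp 1 (fun _ : Fin d => ℝ) := ‖y‖⁻¹ • y with hw_def
  have hwnorm : ‖w‖ = 1 := by
    rw [hw_def, norm_smul, Real.norm_eq_abs, abs_of_pos (inv_pos.mpr hynorm), inv_mul_cancel₀ hynorm.ne']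
  have hwSph : w ∈ Sph := hwnorm
  -- w is close to s
  have hws : dist w s < δ₃ := by
    have h1 : ‖y - ‖y‖ • s‖ ≤ 2 * C' := by
      have : y - ‖y‖ • s = (y - t • s) + (t - ‖y‖) • s := by
        rw [sub_smul]; abel
      rw [this]
      calc ‖(y - t • s) + (t - ‖y‖) • s‖ ≤ ‖y - t • s‖ + ‖(t - ‖y‖) • s‖ := norm_add_le _ _
        _ ≤ C' + C' := by
            apply add_le_add
            · rw [norm_sub_rev]; exact hyt
            · rw [norm_smul, hs1, mul_one, Real.norm_eq_abs, abs_sub_comm]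
              exact abs_le.mpr hty
        _ = 2 * C' := by ring
    have h2 : ‖w - s‖ ≤ 2 * C' / ‖y‖ := by
      have : w - s = ‖y‖⁻¹ • (y - ‖y‖ • s) := by
        rw [hw_def, smul_sub, smul_smul, inv_mul_cancel₀ hynorm.ne', one_smul]
      rw [this, norm_smul, Real.norm_eq_abs, abs_of_pos (inv_pos.mpr hynorm)]
      rw [inv_mul_eq_div, div_le_div_iff₀ hynorm hynorm]
      exact mul_le_mul_of_nonneg_right h1 hynorm.le
    have h3 : 2 * C' / ‖y‖ ≤ δ₃ / 2 := by
      have hlb : 4 * C' / δ₃ ≤ ‖y‖ := by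
        have : C' + 4 * C' / δ₃ ≤ t := le_trans huδ₃ htδu
        linarith
      rw [div_le_div_iff₀ hynorm (by norm_num : (0:ℝ) < 2)]
      rw [div_le_iff₀ hδ₃] at hlb
      linarith only [hlb, mul_comm δ₃ ‖y‖]
    rw [dist_eq_norm]
    linarith
  have hgw : g w ≤ g s + δ₂ := by
    have := hUC w hwSph s hsSph hws
    rw [Real.dist_eq, abs_lt] at this
    linarith [this.1]
  have hgw_pos : 0 < g w := hγpos w hwnorm
  -- bound the exponent
  set D : ℝ := dotp y (γ w) with hD_def
  have hDeq : D = ‖y‖ * g w := by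
    rw [hD_def, hg_def, aux_dotp_smul y hy0 (γ w), hw_def]
  have hr'm : r' ≤ 1 / m := by
    have : 1 / g s ≤ 1 / m := one_div_le_one_div_of_le hm hgs_lb
    linarith
  have ht_ub : t ≤ (1 / m) * u := by
    rw [ht_def]
    exact mul_le_mul_of_nonneg_right hr'm hu.le
  have hD_ub : D ≤ (1 - p) * u + K := by
    rw [hDeq]
    have h1 : ‖y‖ * g w ≤ (t + C') * (g s + δ₂) := by
      apply mul_le_mul h_y_ub hgw hgw_pos.le (by linarith)
    have h2 : t * g s ≤ (1 - δ * m) * u := by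
      have : r' * g s ≤ 1 - δ * g s := by
        have := mul_le_mul_of_nonneg_right hr'2 hgs.le
        rw [sub_mul, one_div, inv_mul_cancel₀ hgs.ne'] at this
        linarith
      have h3 : r' * g s * u ≤ (1 - δ * g s) * u := mul_le_mul_of_nonneg_right this hu.le
      have h4 : (1 - δ * g s) * u ≤ (1 - δ * m) * u := by
        apply mul_le_mul_of_nonneg_right _ hu.le
        have := mul_le_mul_of_nonneg_left hgs_lb hδ.le
        linarith only [this]
      calc t * g s = r' * g s * u := by rw [ht_def]; ring
        _ ≤ _ := le_trans h3 h4
    have h3 : t * δ₂ ≤ (δ * m / 2) * u := by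
      calc t * δ₂ ≤ ((1 / m) * u) * δ₂ := mul_le_mul_of_nonneg_right ht_ub hδ₂.le
        _ = (δ * m / 2) * u * (m * (1/m)) := by rw [hδ₂_def]; ring
        _ = (δ * m / 2) * u := by rw [mul_one_div, div_self hm.ne', mul_one]
    have h4 : C' * (g s + δ₂) ≤ K := by
      rw [hK_def]
      apply mul_le_mul_of_nonneg_left _ hC'.le
      linarith
    have hexpand : (t + C') * (g s + δ₂) = t * g s + t * δ₂ + C' * (g s + δ₂) := by ring
    rw [hp_def]
    linarith only [h1, h2, h3, h4, hexpand]
  -- lower bound on f y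
  have hfy := hfR y hyR
  rw [← hw_def, ← hD_def] at hfy
  have hcw : 0 < c w := hcpos w hwnorm
  have hsq : 0 < Real.sqrt ‖y‖ := Real.sqrt_pos.mpr hynorm
  have hprod : (1:ℝ)/2 ≤ f y * (c w)⁻¹ * Real.sqrt ‖y‖ * Real.exp D := by
    rw [abs_le] at hfy
    linarith [hfy.1]
  have hfy_lb : f y ≥ (1/2) * c w * (Real.sqrt ‖y‖)⁻¹ * Real.exp (-D) := by
    have hpos2 : 0 < c w * (Real.sqrt ‖y‖)⁻¹ * Real.exp (-D) :=
      mul_pos (mul_pos hcw (inv_pos.mpr hsq)) (Real.exp_pos _)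
    have h := mul_le_mul_of_nonneg_right hprod hpos2.le
    have e1 : (c w)⁻¹ * c w = 1 := inv_mul_cancel₀ hcw.ne'
    have e2 : Real.sqrt ‖y‖ * (Real.sqrt ‖y‖)⁻¹ = 1 := mul_inv_cancel₀ hsq.ne'
    have e3 : Real.exp D * Real.exp (-D) = 1 := by rw [← Real.exp_add]; simp
    have hXeq : (f y * (c w)⁻¹ * Real.sqrt ‖y‖ * Real.exp D) *
        (c w * (Real.sqrt ‖y‖)⁻¹ * Real.exp (-D)) = f y := by
      calc (f y * (c w)⁻¹ * Real.sqrt ‖y‖ * Real.exp D) *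
          (c w * (Real.sqrt ‖y‖)⁻¹ * Real.exp (-D))
          = f y * ((c w)⁻¹ * c w) * (Real.sqrt ‖y‖ * (Real.sqrt ‖y‖)⁻¹) *
            (Real.exp D * Real.exp (-D)) := by ring
        _ = f y := by rw [e1, e2, e3]; ring
    rw [hXeq] at h
    linarith only [h]
  -- the chain of bounds showing f y > α / N
  set L : ℝ := (1 / m) * u + C' with hL_def
  clear_value L
  have hL1 : 1 ≤ L := by rw [hL_def]; linarith
  have hLpos : 0 < L := by linarith
  have hyL : ‖y‖ ≤ L := by rw [hL_def]; linarith
  have hsqL : Real.sqrt ‖y‖ ≤ Real.sqrt L := Real.sqrt_le_sqrt hyL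
  have hsqLpos : 0 < Real.sqrt L := Real.sqrt_pos.mpr hLpos
  have hsqinv : (Real.sqrt L)⁻¹ ≤ (Real.sqrt ‖y‖)⁻¹ := by
    exact inv_anti₀ hsq hsqL
  have hexpD : Real.exp (-((1 - p) * u + K)) ≤ Real.exp (-D) := by
    apply Real.exp_le_exp.mpr
    linarith
  have hcwc₀ : c₀ ≤ c w := by rw [hc0_def]; exact hcmin hwSph
  have hfy_lb2 : (1/2) * c₀ * (Real.sqrt L)⁻¹ * Real.exp (-((1 - p) * u + K)) ≤ f y := by
    have step : (1/2) * c₀ * (Real.sqrt L)⁻¹ * Real.exp (-((1 - p) * u + K))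
        ≤ (1/2) * c w * (Real.sqrt ‖y‖)⁻¹ * Real.exp (-D) := by
      have e1 : 0 < Real.exp (-((1 - p) * u + K)) := Real.exp_pos _
      have e2 : 0 < (Real.sqrt L)⁻¹ := inv_pos.mpr hsqLpos
      apply mul_le_mul
      · apply mul_le_mul
        · exact mul_le_mul_of_nonneg_left hcwc₀ (by norm_num)
        · exact hsqinv
        · exact e2.le
        · nlinarith only [hcw]
      · exact hexpD
      · exact e1.le
      · nlinarith only [hcw, inv_pos.mpr hsq]
    linarith [hfy_lb]
  have hαN : α / N < f y := by
    have hNe : (N : ℝ) = Real.exp u := by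
      rw [hu_def, Real.exp_log hNpos]
    have hsqLL : Real.sqrt L ≤ L := by
      have h := Real.sqrt_le_sqrt (by nlinarith only [hL1] : L ≤ L ^ 2)
      rwa [Real.sqrt_sq hLpos.le] at h
    have key : α * Real.exp K * Real.sqrt L < (1/2) * c₀ * Real.exp (p * u) := by
      have h1 : α * Real.exp K * Real.sqrt L ≤ α * Real.exp K * L :=
        mul_le_mul_of_nonneg_left hsqLL (by positivity)
      have h2 : (1/2) * c₀ * ((B + 1) * L) ≤ (1/2) * c₀ * Real.exp (p * u) :=
        mul_le_mul_of_nonneg_left huexp (by positivity)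
      have h3 : (1/2) * c₀ * (B * L) = α * Real.exp K * L := by
        rw [hB_def]; field_simp
      linarith only [h1, h2, h3, mul_pos (mul_pos (by norm_num : (0:ℝ) < 1/2) hc₀) hLpos]
    set q : ℝ := (Real.sqrt L)⁻¹ * Real.exp (-u) * Real.exp (-K) with hq_def
    have hq : 0 < q := mul_pos (mul_pos (inv_pos.mpr hsqLpos) (Real.exp_pos _)) (Real.exp_pos _)
    have e1 : α * Real.exp (-u) = (α * Real.exp K * Real.sqrt L) * q := by
      rw [hq_def, Real.exp_neg K]
      field_simp
    have e2 : (1/2) * c₀ * (Real.sqrt L)⁻¹ * Real.exp (-((1 - p) * u + K))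
        = ((1/2) * c₀ * Real.exp (p * u)) * q := by
      rw [hq_def]
      have hexp : Real.exp (p * u) * Real.exp (-u) * Real.exp (-K)
          = Real.exp (-((1 - p) * u + K)) := by
        rw [← Real.exp_add, ← Real.exp_add]; congr 1; ring
      rw [← hexp]; ring
    have hlt := mul_lt_mul_of_pos_right key hq
    rw [← e1, ← e2] at hlt
    have hdiv : α / N = α * Real.exp (-u) := by
      rw [hNe, Real.exp_neg, div_eq_mul_inv]
    linarith [hfy_lb2]
  -- conclude
  have hySN : y ∈ SN N := (hSN N hN2).1 ⟨hyS, hαN⟩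
  have hmem : u⁻¹ • y ∈ u⁻¹ • SN N := Set.smul_mem_smul_set hySN
  refine le_trans (Metric.infDist_le_dist_of_mem hmem) ?_
  rw [dist_eq_norm]
  have hdecomp : r • s - u⁻¹ • y = (r - r') • s + u⁻¹ • (t • s - y) := by
    rw [smul_sub, smul_smul, ht_def]
    have huu : u⁻¹ * (r' * u) = r' := by field_simp
    rw [huu, sub_smul]
    abel
  rw [hdecomp]
  have hCu : C' / u ≤ ε / 2 := by
    rw [div_le_iff₀ hu]; linarith
  calc ‖(r - r') • s + u⁻¹ • (t • s - y)‖
      ≤ ‖(r - r') • s‖ + ‖u⁻¹ • (t • s - y)‖ := norm_add_le _ _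
    _ ≤ δ + C' / u := by
        apply add_le_add
        · rw [norm_smul, hs1, mul_one, Real.norm_eq_abs]; exact hrr'
        · rw [norm_smul, Real.norm_eq_abs, abs_of_pos (inv_pos.mpr hu)]
          rw [inv_mul_eq_div, div_le_div_iff₀ hu hu]
          exact mul_le_mul_of_nonneg_right hyt hu.le
    _ ≤ ε / 2 + ε / 2 := add_le_add hδε hCu
    _ = ε := by ring
end
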